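/- arXiv:2605.24714 — 6 statements merged into one kernel-verified Lean document; each statement's English description precedes it below -/
import Mathlib

section
/- There exist functions τ1, τ2 : ℕ → ℕ ∪ {+∞} such that: (i) b ≤ τ1(b) and τ1(b) ≤ τ2(b) for every b ≥ 1; (ii) τ1 is nondecreasing; and (iii) for every (m,b) ∈ S: if m ≤ τ1(b) then Q0(V★)(m,b) ≤ Q1(V★)(m,b) and Q0(V★)(m,b) ≤ Q2(V★)(m,b) (sensing is optimal); if τ1(b) < m ≤ τ2(b) then Q2(V★)(m,b) ≤ Q0(V★)(m,b) and Q2(V★)(m,b) ≤ Q1(V★)(m,b) (joint sensing and communication is optimal); and if m > τ2(b) then Q1(V★)(m,b) ≤ Q0(V★)(m,b) and Q1(V★)(m,b) ≤ Q2(V★)(m,b) (communication is optimal). In other words, the optimal stationary policy has an ordered two-threshold structure in the AoI state space. -/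
set_option maxHeartbeats 0

/-- Action-value for sensing (`u = 0`). -/
noncomputable def Q0 (γ lam0 c0 : ℝ) (V : ℕ → ℕ → ℝ) (m b : ℕ) : ℝ :=
  (m : ℝ) + c0 + γ * (lam0 * V (m + 1) 1 + (1 - lam0) * V (m + 1) (b + 1))

/-- Action-value for communication (`u = 1`). -/
noncomputable def Q1 (γ lam1 c1 : ℝ) (V : ℕ → ℕ → ℝ) (m b : ℕ) : ℝ :=
  (m : ℝ) + c1 + γ * (lam1 * V (b + 1) (b + 1) + (1 - lam1) * V (m + 1) (b + 1))

/-- Action-value for joint sensing and communication (`u = 2`). -/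
noncomputable def Q2 (γ lam2 c2 : ℝ) (V : ℕ → ℕ → ℝ) (m b : ℕ) : ℝ :=
  (m : ℝ) + c2 + γ * (lam2 * V (b + 1) 1 + (1 - lam2) * V (m + 1) (b + 1))

/-- The Bellman operator `T`. -/
noncomputable def Tbell (γ lam0 lam1 lam2 c0 c1 c2 : ℝ) (V : ℕ → ℕ → ℝ) (m b : ℕ) : ℝ :=
  min (Q0 γ lam0 c0 V m b) (min (Q1 γ lam1 c1 V m b) (Q2 γ lam2 c2 V m b))

/-- The optimal stationary policy has an ordered two-threshold
structure: there are thresholds `τ1 ≤ τ2` (valued in `ℕ∞`), with `τ1` nondecreasing and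
`b ≤ τ1 b`, such that sensing is optimal for `m ≤ τ1 b`, the joint action is optimal for
`τ1 b < m ≤ τ2 b`, and communication is optimal for `m > τ2 b`. -/
theorem ordered_threshold_structure
    (γ lam0 lam1 lam2 c0 c1 c2 ρ : ℝ)
    (hγ0 : 0 < γ) (hγ1 : γ < 1)
    (hl0 : 0 < lam0) (hl0' : lam0 < 1)
    (hl1 : 0 < lam1) (hl1' : lam1 < 1)
    (hl2 : 0 < lam2) (hl2' : lam2 < 1)
    (hc0 : 0 ≤ c0) (hc1 : 0 ≤ c1) (hc2 : 0 ≤ c2)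
    (hord1 : lam2 ≤ lam0) (hord2 : lam0 ≤ lam1)
    (hord3 : c0 ≤ c1) (hord4 : c1 ≤ c2)
    (hAss1 : γ ≤ lam2 / (lam0 * lam1 + lam2 * (1 - lam1)))
    (hρ1 : 1 < ρ) (hρ2 : ρ < 1 / γ)
    (Vstar : ℕ → ℕ → ℝ)
    (hnorm : ∃ C : ℝ, ∀ m b : ℕ, 1 ≤ b → b ≤ m → |Vstar m b| ≤ C * ρ ^ m)
    (hfix : ∀ m b : ℕ, 1 ≤ b → b ≤ m →
      Vstar m b = Tbell γ lam0 lam1 lam2 c0 c1 c2 Vstar m b) :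
    ∃ τ1 τ2 : ℕ → ℕ∞,
      (∀ b : ℕ, 1 ≤ b → (b : ℕ∞) ≤ τ1 b ∧ τ1 b ≤ τ2 b) ∧
      (∀ b b' : ℕ, 1 ≤ b → b ≤ b' → τ1 b ≤ τ1 b') ∧
      (∀ m b : ℕ, 1 ≤ b → b ≤ m →
        ((m : ℕ∞) ≤ τ1 b →
          Q0 γ lam0 c0 Vstar m b ≤ Q1 γ lam1 c1 Vstar m b ∧
          Q0 γ lam0 c0 Vstar m b ≤ Q2 γ lam2 c2 Vstar m b) ∧
        (τ1 b < (m : ℕ∞) → (m : ℕ∞) ≤ τ2 b →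
          Q2 γ lam2 c2 Vstar m b ≤ Q0 γ lam0 c0 Vstar m b ∧
          Q2 γ lam2 c2 Vstar m b ≤ Q1 γ lam1 c1 Vstar m b) ∧
        (τ2 b < (m : ℕ∞) →
          Q1 γ lam1 c1 Vstar m b ≤ Q0 γ lam0 c0 Vstar m b ∧
          Q1 γ lam1 c1 Vstar m b ≤ Q2 γ lam2 c2 Vstar m b)) := by
  classical
  obtain ⟨C, hC⟩ := hnorm
  have hγ1' : 0 < 1 - γ := by linarith
  have hden : 0 < 1 - γ * (1 - lam1) := by nlinarith
  set L : ℝ := 1 / (1 - γ * (1 - lam1)) with hLdef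
  set U : ℝ := 1 / (1 - γ) with hUdef
  have hLpos : 0 < L := by positivity
  have hUpos : 0 < U := by positivity
  have hL1 : 1 ≤ L := by
    rw [hLdef, le_div_iff₀ hden]; nlinarith
  have hLfix : L = 1 + γ * (1 - lam1) * L := by
    rw [hLdef]; field_simp; ring
  have hUfix : U = 1 + γ * U := by
    rw [hUdef]; field_simp; ring
  have hLU : L ≤ U := by
    rw [hLdef, hUdef]
    exact one_div_le_one_div_of_le hγ1' (by nlinarith)
  have hAkey : γ * (lam0 * lam1 + lam2 * (1 - lam1)) ≤ lam2 := by
    have hdpos : 0 < lam0 * lam1 + lam2 * (1 - lam1) := by nlinarith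
    rw [le_div_iff₀ hdpos] at hAss1; linarith
  -- (lam0 - lam2) * U ≤ lam0 * L
  have hA1 : (lam0 - lam2) * U ≤ lam0 * L := by
    have e1 : (lam0 - lam2) * U = (lam0 - lam2) / (1 - γ) := by rw [hUdef]; ring
    have e2 : lam0 * L = lam0 / (1 - γ * (1 - lam1)) := by rw [hLdef]; ring
    rw [e1, e2, div_le_div_iff₀ hγ1' hden]
    nlinarith [hAkey]
  -- γ * (lam0 - lam2) * U ≤ 1
  have hA2 : γ * (lam0 - lam2) * U ≤ 1 := by
    have h' : γ * (lam0 - lam2) ≤ 1 - γ := by nlinarith [hAkey]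
    have e1 : γ * (lam0 - lam2) * U = (γ * (lam0 - lam2)) / (1 - γ) := by rw [hUdef]; ring
    rw [e1, div_le_one hγ1']; exact h'
  set T : (ℕ → ℕ → ℝ) → ℕ → ℕ → ℝ := Tbell γ lam0 lam1 lam2 c0 c1 c2 with hTdef
  have hT0 : ∀ V m b, T V m b ≤ Q0 γ lam0 c0 V m b := by
    intro V m b; exact min_le_left _ _
  have hT1 : ∀ V m b, T V m b ≤ Q1 γ lam1 c1 V m b := by
    intro V m b; exact le_trans (min_le_right _ _) (min_le_left _ _)
  have hT2 : ∀ V m b, T V m b ≤ Q2 γ lam2 c2 V m b := by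
    intro V m b; exact le_trans (min_le_right _ _) (min_le_right _ _)
  have hTc : ∀ V m b, T V m b = Q0 γ lam0 c0 V m b ∨ T V m b = Q1 γ lam1 c1 V m b ∨
      T V m b = Q2 γ lam2 c2 V m b := by
    intro V m b
    rcases min_cases (Q0 γ lam0 c0 V m b) (min (Q1 γ lam1 c1 V m b) (Q2 γ lam2 c2 V m b)) with
      h | h
    · exact Or.inl h.1
    · rcases min_cases (Q1 γ lam1 c1 V m b) (Q2 γ lam2 c2 V m b) with h' | h'
      · exact Or.inr (Or.inl (h.1.trans h'.1))
      · exact Or.inr (Or.inr (h.1.trans h'.1))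
  -- increment formulas
  have dQ0m : ∀ (V : ℕ → ℕ → ℝ) m b, Q0 γ lam0 c0 V (m+1) b - Q0 γ lam0 c0 V m b =
      1 + γ * (lam0 * (V (m+2) 1 - V (m+1) 1) + (1-lam0) * (V (m+2) (b+1) - V (m+1) (b+1))) := by
    intro V m b; simp only [Q0]; push_cast; ring
  have dQ1m : ∀ (V : ℕ → ℕ → ℝ) m b, Q1 γ lam1 c1 V (m+1) b - Q1 γ lam1 c1 V m b =
      1 + γ * ((1-lam1) * (V (m+2) (b+1) - V (m+1) (b+1))) := by
    intro V m b; simp only [Q1]; push_cast; ring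
  have dQ2m : ∀ (V : ℕ → ℕ → ℝ) m b, Q2 γ lam2 c2 V (m+1) b - Q2 γ lam2 c2 V m b =
      1 + γ * ((1-lam2) * (V (m+2) (b+1) - V (m+1) (b+1))) := by
    intro V m b; simp only [Q2]; push_cast; ring
  have dQ0b : ∀ (V : ℕ → ℕ → ℝ) m b, Q0 γ lam0 c0 V m (b+1) - Q0 γ lam0 c0 V m b =
      γ * ((1-lam0) * (V (m+1) (b+2) - V (m+1) (b+1))) := by
    intro V m b; simp only [Q0]; push_cast; ring
  have dQ1b : ∀ (V : ℕ → ℕ → ℝ) m b, Q1 γ lam1 c1 V m (b+1) - Q1 γ lam1 c1 V m b =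
      γ * (lam1 * (V (b+2) (b+2) - V (b+1) (b+1)) + (1-lam1) * (V (m+1) (b+2) - V (m+1) (b+1))) := by
    intro V m b; simp only [Q1]; push_cast; ring
  have dQ2b : ∀ (V : ℕ → ℕ → ℝ) m b, Q2 γ lam2 c2 V m (b+1) - Q2 γ lam2 c2 V m b =
      γ * (lam2 * (V (b+2) 1 - V (b+1) 1) + (1-lam2) * (V (m+1) (b+2) - V (m+1) (b+1))) := by
    intro V m b; simp only [Q2]; push_cast; ring
  have dQ0d : ∀ (V : ℕ → ℕ → ℝ) m, Q0 γ lam0 c0 V (m+1) (m+1) - Q0 γ lam0 c0 V m m =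
      1 + γ * (lam0 * (V (m+2) 1 - V (m+1) 1) + (1-lam0) * (V (m+2) (m+2) - V (m+1) (m+1))) := by
    intro V m; simp only [Q0]; push_cast; ring
  have dQ1d : ∀ (V : ℕ → ℕ → ℝ) m, Q1 γ lam1 c1 V (m+1) (m+1) - Q1 γ lam1 c1 V m m =
      1 + γ * (V (m+2) (m+2) - V (m+1) (m+1)) := by
    intro V m; simp only [Q1]; push_cast; ring
  have dQ2d : ∀ (V : ℕ → ℕ → ℝ) m, Q2 γ lam2 c2 V (m+1) (m+1) - Q2 γ lam2 c2 V m m =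
      1 + γ * (lam2 * (V (m+2) 1 - V (m+1) 1) + (1-lam2) * (V (m+2) (m+2) - V (m+1) (m+1))) := by
    intro V m; simp only [Q2]; push_cast; ring
  -- value iteration sequence
  set W : ℕ → ℕ → ℕ → ℝ := fun n => T^[n] (fun m _ => L * (m : ℝ)) with hWdef
  have hW0 : ∀ m b, W 0 m b = L * m := by intro m b; rw [hWdef]; simp
  have hWs : ∀ n, W (n+1) = T (W n) := by
    intro n; rw [hWdef]; exact Function.iterate_succ_apply' _ _ _
  -- structural invariants of the iterates
  have good : ∀ n,
      (∀ m b, 1 ≤ b → b ≤ m → L ≤ W n (m+1) b - W n m b) ∧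
      (∀ m b, 1 ≤ b → b ≤ m → W n (m+1) b - W n m b ≤ U) ∧
      (∀ m b, 1 ≤ b → b+1 ≤ m → 0 ≤ W n m (b+1) - W n m b) ∧
      (∀ m, 1 ≤ m → W n (m+1) (m+1) - W n m m ≤ U) ∧
      (∀ m b, 1 ≤ b → b ≤ m → W n (m+1) b - W n m b ≤ W n (m+1) (m+1) - W n m m) ∧
      (∀ m b, 1 ≤ b → b < m →
        (lam1-lam0) * (W n m (b+1) - W n m b) ≤ lam1 * (W n (b+1) (b+1) - W n b b)) := by
    intro n
    induction n with
    | zero =>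
      refine ⟨?_, ?_, ?_, ?_, ?_, ?_⟩ <;> intros <;> simp only [hW0] <;> push_cast <;>
        [skip; skip; skip; skip; skip; skip] <;> nlinarith [hLpos, hLU, hl1.le]
    | succ n ih =>
      obtain ⟨i1L, i1U, i2, i3, i4, i5⟩ := ih
      set V : ℕ → ℕ → ℝ := W n with hV
      -- derived facts about V
      have hd0 : ∀ m b, 1 ≤ b → b ≤ m → 0 ≤ V (m+1) b - V m b := by
        intro m b hb hbm; linarith [i1L m b hb hbm]
      have hdeL : ∀ m, 1 ≤ m → L ≤ V (m+1) (m+1) - V m m := by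
        intro m hm
        have h1 := i1L m m hm le_rfl
        have h2 := i2 (m+1) m hm (by omega)
        linarith
      have hde0 : ∀ m, 1 ≤ m → 0 ≤ V (m+1) (m+1) - V m m := by
        intro m hm; linarith [hdeL m hm]
      rw [hWs n]
      refine ⟨?_, ?_, ?_, ?_, ?_, ?_⟩
      · -- I1 lower
        intro m b hb hbm
        have f1 := i1L (m+1) 1 le_rfl (by omega)
        have f2 := i1L (m+1) (b+1) (by omega) (by omega)
        have key : γ * ((1-lam1) * L) ≤ γ * ((1-lam1) * (V (m+2) (b+1) - V (m+1) (b+1))) := by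
          apply mul_le_mul_of_nonneg_left _ hγ0.le
          apply mul_le_mul_of_nonneg_left f2 (by linarith)
        have hx1 : 0 ≤ γ * (lam0 * (V (m+2) 1 - V (m+1) 1)) := by
          apply mul_nonneg hγ0.le; apply mul_nonneg hl0.le; linarith
        have key0 : γ * ((1-lam0) * L) ≤ γ * ((1-lam0) * (V (m+2) (b+1) - V (m+1) (b+1))) := by
          apply mul_le_mul_of_nonneg_left _ hγ0.le
          apply mul_le_mul_of_nonneg_left f2 (by linarith)
        have key0' : γ * ((1-lam1) * L) ≤ γ * ((1-lam0) * L) := by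
          apply mul_le_mul_of_nonneg_left _ hγ0.le
          apply mul_le_mul_of_nonneg_right (by linarith) hLpos.le
        have key2 : γ * ((1-lam1) * L) ≤ γ * ((1-lam2) * (V (m+2) (b+1) - V (m+1) (b+1))) := by
          apply mul_le_mul_of_nonneg_left _ hγ0.le
          calc (1-lam1) * L ≤ (1-lam2) * L := by
                apply mul_le_mul_of_nonneg_right (by linarith) hLpos.le
            _ ≤ (1-lam2) * (V (m+2) (b+1) - V (m+1) (b+1)) := by
                apply mul_le_mul_of_nonneg_left f2 (by linarith)
        rcases hTc V (m+1) b with h | h | h <;> rw [h]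
        · have t := hT0 V m b
          have e := dQ0m V m b
          linarith
        · have t := hT1 V m b
          have e := dQ1m V m b
          linarith
        · have t := hT2 V m b
          have e := dQ2m V m b
          linarith
      · -- I1 upper
        intro m b hb hbm
        have f1 := i1U (m+1) 1 le_rfl (by omega)
        have f2 := i1U (m+1) (b+1) (by omega) (by omega)
        have g1 := hd0 (m+1) 1 le_rfl (by omega)
        have g2 := hd0 (m+1) (b+1) (by omega) (by omega)
        have key : γ * (lam0 * (V (m+2) 1 - V (m+1) 1) + (1-lam0) * (V (m+2) (b+1) - V (m+1) (b+1))) ≤ γ * U := by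
          apply mul_le_mul_of_nonneg_left _ hγ0.le
          nlinarith
        have key1 : γ * ((1-lam1) * (V (m+2) (b+1) - V (m+1) (b+1))) ≤ γ * U := by
          apply mul_le_mul_of_nonneg_left _ hγ0.le
          nlinarith
        have key2 : γ * ((1-lam2) * (V (m+2) (b+1) - V (m+1) (b+1))) ≤ γ * U := by
          apply mul_le_mul_of_nonneg_left _ hγ0.le
          nlinarith
        rcases hTc V m b with h | h | h <;> rw [h]
        · have t := hT0 V (m+1) b
          have e := dQ0m V m b
          linarith
        · have t := hT1 V (m+1) b
          have e := dQ1m V m b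
          linarith
        · have t := hT2 V (m+1) b
          have e := dQ2m V m b
          linarith
      · -- I2
        intro m b hb hbm
        have g2 := i2 (m+1) (b+1) (by omega) (by omega)
        have gde := hde0 (b+1) (by omega)
        have gv1 := hd0 (b+1) 1 le_rfl (by omega)
        rcases hTc V m (b+1) with h | h | h <;> rw [h]
        · have t := hT0 V m b
          have e := dQ0b V m b
          nlinarith [mul_nonneg hγ0.le (mul_nonneg (by linarith : (0:ℝ) ≤ 1-lam0) g2)]
        · have t := hT1 V m b
          have e := dQ1b V m b
          nlinarith [mul_nonneg hγ0.le (mul_nonneg (by linarith : (0:ℝ) ≤ 1-lam1) g2),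
            mul_nonneg hγ0.le (mul_nonneg hl1.le gde)]
        · have t := hT2 V m b
          have e := dQ2b V m b
          nlinarith [mul_nonneg hγ0.le (mul_nonneg (by linarith : (0:ℝ) ≤ 1-lam2) g2),
            mul_nonneg hγ0.le (mul_nonneg hl2.le gv1)]
      · -- I3
        intro m hm
        have f1 := i1U (m+1) 1 le_rfl (by omega)
        have g1 := hd0 (m+1) 1 le_rfl (by omega)
        have f2 := i3 (m+1) (by omega)
        have g2 := hde0 (m+1) (by omega)
        rcases hTc V m m with h | h | h <;> rw [h]
        · have t := hT0 V (m+1) (m+1)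
          have e := dQ0d V m
          have key : γ * (lam0 * (V (m+2) 1 - V (m+1) 1) + (1-lam0) * (V (m+2) (m+2) - V (m+1) (m+1))) ≤ γ * U := by
            apply mul_le_mul_of_nonneg_left _ hγ0.le; nlinarith
          linarith
        · have t := hT1 V (m+1) (m+1)
          have e := dQ1d V m
          have key : γ * (V (m+2) (m+2) - V (m+1) (m+1)) ≤ γ * U :=
            mul_le_mul_of_nonneg_left f2 hγ0.le
          linarith
        · have t := hT2 V (m+1) (m+1)
          have e := dQ2d V m
          have key : γ * (lam2 * (V (m+2) 1 - V (m+1) 1) + (1-lam2) * (V (m+2) (m+2) - V (m+1) (m+1))) ≤ γ * U := by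
            apply mul_le_mul_of_nonneg_left _ hγ0.le; nlinarith
          linarith
      · -- I4
        intro m b hb hbm
        have hvD := i4 (m+1) 1 le_rfl (by omega)
        have hxD := i4 (m+1) (b+1) (by omega) (by omega)
        have hvL := i1L (m+1) 1 le_rfl (by omega)
        have hDU := i3 (m+1) (by omega)
        have hx0 := hd0 (m+1) (b+1) (by omega) (by omega)
        have hv0 := hd0 (m+1) 1 le_rfl (by omega)
        have hD0 := hde0 (m+1) (by omega)
        rcases hTc V m b with h | h | h <;>
          rcases hTc V (m+1) (m+1) with h' | h' | h' <;> rw [h, h']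
        · have t1 := hT0 V (m+1) b
          have t2 := hT0 V m m
          have core : Q0 γ lam0 c0 V (m+1) b - Q0 γ lam0 c0 V m b ≤ Q0 γ lam0 c0 V (m+1) (m+1) - Q0 γ lam0 c0 V m m := by
            rw [dQ0m V m b, dQ0d V m]
            linarith [mul_nonneg hγ0.le (mul_nonneg (by linarith : (0:ℝ) ≤ 1-lam0) (by linarith : (0:ℝ) ≤ (V (m+2) (m+2) - V (m+1) (m+1)) - (V (m+2) (b+1) - V (m+1) (b+1))))]
          linarith
        · have t1 := hT0 V (m+1) b
          have t2 := hT1 V m m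
          have core : Q0 γ lam0 c0 V (m+1) b - Q0 γ lam0 c0 V m b ≤ Q1 γ lam1 c1 V (m+1) (m+1) - Q1 γ lam1 c1 V m m := by
            rw [dQ0m V m b, dQ1d V m]
            linarith [mul_nonneg hγ0.le (mul_nonneg hl0.le (by linarith : (0:ℝ) ≤ (V (m+2) (m+2) - V (m+1) (m+1)) - (V (m+2) 1 - V (m+1) 1))), mul_nonneg hγ0.le (mul_nonneg (by linarith : (0:ℝ) ≤ 1-lam0) (by linarith : (0:ℝ) ≤ (V (m+2) (m+2) - V (m+1) (m+1)) - (V (m+2) (b+1) - V (m+1) (b+1))))]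
          linarith
        · have t1 := hT0 V (m+1) b
          have t2 := hT2 V m m
          have core : Q0 γ lam0 c0 V (m+1) b - Q0 γ lam0 c0 V m b ≤ Q2 γ lam2 c2 V (m+1) (m+1) - Q2 γ lam2 c2 V m m := by
            rw [dQ0m V m b, dQ2d V m]
            linarith [mul_nonneg hγ0.le (mul_nonneg (by linarith : (0:ℝ) ≤ lam0-lam2) (by linarith : (0:ℝ) ≤ (V (m+2) (m+2) - V (m+1) (m+1)) - (V (m+2) 1 - V (m+1) 1))), mul_nonneg hγ0.le (mul_nonneg (by linarith : (0:ℝ) ≤ 1-lam0) (by linarith : (0:ℝ) ≤ (V (m+2) (m+2) - V (m+1) (m+1)) - (V (m+2) (b+1) - V (m+1) (b+1))))]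
          linarith
        · have t1 := hT1 V (m+1) b
          have t2 := hT0 V m m
          have core : Q1 γ lam1 c1 V (m+1) b - Q1 γ lam1 c1 V m b ≤ Q0 γ lam0 c0 V (m+1) (m+1) - Q0 γ lam0 c0 V m m := by
            rw [dQ1m V m b, dQ0d V m]
            linarith [mul_nonneg hγ0.le (mul_nonneg hl0.le hv0), mul_nonneg hγ0.le (mul_nonneg (by linarith : (0:ℝ) ≤ lam1-lam0) hD0), mul_nonneg hγ0.le (mul_nonneg (by linarith : (0:ℝ) ≤ 1-lam1) (by linarith : (0:ℝ) ≤ (V (m+2) (m+2) - V (m+1) (m+1)) - (V (m+2) (b+1) - V (m+1) (b+1))))]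
          linarith
        · have t1 := hT1 V (m+1) b
          have t2 := hT1 V m m
          have core : Q1 γ lam1 c1 V (m+1) b - Q1 γ lam1 c1 V m b ≤ Q1 γ lam1 c1 V (m+1) (m+1) - Q1 γ lam1 c1 V m m := by
            rw [dQ1m V m b, dQ1d V m]
            linarith [mul_nonneg hγ0.le (mul_nonneg hl1.le hD0), mul_nonneg hγ0.le (mul_nonneg (by linarith : (0:ℝ) ≤ 1-lam1) (by linarith : (0:ℝ) ≤ (V (m+2) (m+2) - V (m+1) (m+1)) - (V (m+2) (b+1) - V (m+1) (b+1))))]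
          linarith
        · have t1 := hT1 V (m+1) b
          have t2 := hT2 V m m
          have core : Q1 γ lam1 c1 V (m+1) b - Q1 γ lam1 c1 V m b ≤ Q2 γ lam2 c2 V (m+1) (m+1) - Q2 γ lam2 c2 V m m := by
            rw [dQ1m V m b, dQ2d V m]
            linarith [mul_nonneg hγ0.le (mul_nonneg hl2.le hv0), mul_nonneg hγ0.le (mul_nonneg (by linarith : (0:ℝ) ≤ lam1-lam2) hD0), mul_nonneg hγ0.le (mul_nonneg (by linarith : (0:ℝ) ≤ 1-lam1) (by linarith : (0:ℝ) ≤ (V (m+2) (m+2) - V (m+1) (m+1)) - (V (m+2) (b+1) - V (m+1) (b+1))))]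
          linarith
        · have t1 := hT2 V (m+1) b
          have t2 := hT0 V m m
          have core : Q2 γ lam2 c2 V (m+1) b - Q2 γ lam2 c2 V m b ≤ Q0 γ lam0 c0 V (m+1) (m+1) - Q0 γ lam0 c0 V m m := by
            rw [dQ2m V m b, dQ0d V m]
            linarith [mul_nonneg hγ0.le (mul_nonneg (by linarith : (0:ℝ) ≤ 1-lam2) (by linarith : (0:ℝ) ≤ (V (m+2) (m+2) - V (m+1) (m+1)) - (V (m+2) (b+1) - V (m+1) (b+1)))), mul_le_mul_of_nonneg_left (mul_le_mul_of_nonneg_left hDU (by linarith : (0:ℝ) ≤ lam0-lam2)) hγ0.le, mul_le_mul_of_nonneg_left hA1 hγ0.le, mul_le_mul_of_nonneg_left (mul_le_mul_of_nonneg_left hvL hl0.le) hγ0.le]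
          linarith
        · have t1 := hT2 V (m+1) b
          have t2 := hT1 V m m
          have core : Q2 γ lam2 c2 V (m+1) b - Q2 γ lam2 c2 V m b ≤ Q1 γ lam1 c1 V (m+1) (m+1) - Q1 γ lam1 c1 V m m := by
            rw [dQ2m V m b, dQ1d V m]
            linarith [mul_nonneg hγ0.le (mul_nonneg hl2.le hD0), mul_nonneg hγ0.le (mul_nonneg (by linarith : (0:ℝ) ≤ 1-lam2) (by linarith : (0:ℝ) ≤ (V (m+2) (m+2) - V (m+1) (m+1)) - (V (m+2) (b+1) - V (m+1) (b+1))))]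
          linarith
        · have t1 := hT2 V (m+1) b
          have t2 := hT2 V m m
          have core : Q2 γ lam2 c2 V (m+1) b - Q2 γ lam2 c2 V m b ≤ Q2 γ lam2 c2 V (m+1) (m+1) - Q2 γ lam2 c2 V m m := by
            rw [dQ2m V m b, dQ2d V m]
            linarith [mul_nonneg hγ0.le (mul_nonneg hl2.le hv0), mul_nonneg hγ0.le (mul_nonneg (by linarith : (0:ℝ) ≤ 1-lam2) (by linarith : (0:ℝ) ≤ (V (m+2) (m+2) - V (m+1) (m+1)) - (V (m+2) (b+1) - V (m+1) (b+1))))]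
          linarith
      · -- I5
        intro m b hb hbm
        have hJ := i5 (m+1) (b+1) (by omega) (by omega)
        have hB0 := i2 (m+1) (b+1) (by omega) (by omega)
        have hwE := i4 (b+1) 1 le_rfl (by omega)
        have hw0 := hd0 (b+1) 1 le_rfl (by omega)
        have hEL := hdeL (b+1) (by omega)
        have hEU := i3 (b+1) (by omega)
        have hE0 : (0:ℝ) ≤ V (b+2) (b+2) - V (b+1) (b+1) := by linarith
        have hl10 : (0:ℝ) ≤ lam1 - lam0 := by linarith
        rcases hTc V m b with h | h | h <;>
          rcases hTc V (b+1) (b+1) with h' | h' | h' <;> rw [h, h']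
        · have t1 := hT0 V m (b+1)
          have t2 := hT0 V b b
          have core : (lam1-lam0) * (Q0 γ lam0 c0 V m (b+1) - Q0 γ lam0 c0 V m b) ≤
              lam1 * (Q0 γ lam0 c0 V (b+1) (b+1) - Q0 γ lam0 c0 V b b) := by
            rw [dQ0b V m b, dQ0d V b]
            linarith [mul_le_mul_of_nonneg_left hJ (mul_nonneg hγ0.le (by linarith : (0:ℝ) ≤ 1-lam0)), mul_nonneg hl1.le (mul_nonneg hγ0.le (mul_nonneg hl0.le hw0)), hl1.le]
          have s1 : (lam1-lam0) * (T V m (b+1) - Q0 γ lam0 c0 V m b) ≤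
              (lam1-lam0) * (Q0 γ lam0 c0 V m (b+1) - Q0 γ lam0 c0 V m b) := by
            apply mul_le_mul_of_nonneg_left _ hl10; linarith
          have s2 : lam1 * (Q0 γ lam0 c0 V (b+1) (b+1) - Q0 γ lam0 c0 V b b) ≤
              lam1 * (Q0 γ lam0 c0 V (b+1) (b+1) - T V b b) := by
            apply mul_le_mul_of_nonneg_left _ hl1.le; linarith
          linarith
        · have t1 := hT0 V m (b+1)
          have t2 := hT1 V b b
          have core : (lam1-lam0) * (Q0 γ lam0 c0 V m (b+1) - Q0 γ lam0 c0 V m b) ≤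
              lam1 * (Q1 γ lam1 c1 V (b+1) (b+1) - Q1 γ lam1 c1 V b b) := by
            rw [dQ0b V m b, dQ1d V b]
            linarith [mul_le_mul_of_nonneg_left hJ (mul_nonneg hγ0.le (by linarith : (0:ℝ) ≤ 1-lam0)), mul_nonneg hl1.le (mul_nonneg (mul_nonneg hγ0.le hl0.le) hE0), hl1.le]
          have s1 : (lam1-lam0) * (T V m (b+1) - Q0 γ lam0 c0 V m b) ≤
              (lam1-lam0) * (Q0 γ lam0 c0 V m (b+1) - Q0 γ lam0 c0 V m b) := by
            apply mul_le_mul_of_nonneg_left _ hl10; linarith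
          have s2 : lam1 * (Q1 γ lam1 c1 V (b+1) (b+1) - Q1 γ lam1 c1 V b b) ≤
              lam1 * (Q1 γ lam1 c1 V (b+1) (b+1) - T V b b) := by
            apply mul_le_mul_of_nonneg_left _ hl1.le; linarith
          linarith
        · have t1 := hT0 V m (b+1)
          have t2 := hT2 V b b
          have core : (lam1-lam0) * (Q0 γ lam0 c0 V m (b+1) - Q0 γ lam0 c0 V m b) ≤
              lam1 * (Q2 γ lam2 c2 V (b+1) (b+1) - Q2 γ lam2 c2 V b b) := by
            rw [dQ0b V m b, dQ2d V b]
            linarith [mul_le_mul_of_nonneg_left hJ (mul_nonneg hγ0.le (by linarith : (0:ℝ) ≤ 1-lam0)), mul_nonneg hl1.le (mul_nonneg (mul_nonneg hγ0.le hl2.le) hw0), mul_nonneg hl1.le (mul_nonneg (mul_nonneg hγ0.le (by linarith : (0:ℝ) ≤ lam0-lam2)) hE0), hl1.le]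
          have s1 : (lam1-lam0) * (T V m (b+1) - Q0 γ lam0 c0 V m b) ≤
              (lam1-lam0) * (Q0 γ lam0 c0 V m (b+1) - Q0 γ lam0 c0 V m b) := by
            apply mul_le_mul_of_nonneg_left _ hl10; linarith
          have s2 : lam1 * (Q2 γ lam2 c2 V (b+1) (b+1) - Q2 γ lam2 c2 V b b) ≤
              lam1 * (Q2 γ lam2 c2 V (b+1) (b+1) - T V b b) := by
            apply mul_le_mul_of_nonneg_left _ hl1.le; linarith
          linarith
        · have t1 := hT1 V m (b+1)
          have t2 := hT0 V b b
          have core : (lam1-lam0) * (Q1 γ lam1 c1 V m (b+1) - Q1 γ lam1 c1 V m b) ≤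
              lam1 * (Q0 γ lam0 c0 V (b+1) (b+1) - Q0 γ lam0 c0 V b b) := by
            rw [dQ1b V m b, dQ0d V b]
            linarith [mul_le_mul_of_nonneg_left hJ (mul_nonneg hγ0.le (by linarith : (0:ℝ) ≤ 1-lam1)), mul_nonneg hl1.le (mul_nonneg (mul_nonneg hγ0.le hl0.le) hw0), mul_nonneg hl1.le (mul_nonneg (mul_nonneg hγ0.le hl0.le) hE0), hl1.le]
          have s1 : (lam1-lam0) * (T V m (b+1) - Q1 γ lam1 c1 V m b) ≤
              (lam1-lam0) * (Q1 γ lam1 c1 V m (b+1) - Q1 γ lam1 c1 V m b) := by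
            apply mul_le_mul_of_nonneg_left _ hl10; linarith
          have s2 : lam1 * (Q0 γ lam0 c0 V (b+1) (b+1) - Q0 γ lam0 c0 V b b) ≤
              lam1 * (Q0 γ lam0 c0 V (b+1) (b+1) - T V b b) := by
            apply mul_le_mul_of_nonneg_left _ hl1.le; linarith
          linarith
        · have t1 := hT1 V m (b+1)
          have t2 := hT1 V b b
          have core : (lam1-lam0) * (Q1 γ lam1 c1 V m (b+1) - Q1 γ lam1 c1 V m b) ≤
              lam1 * (Q1 γ lam1 c1 V (b+1) (b+1) - Q1 γ lam1 c1 V b b) := by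
            rw [dQ1b V m b, dQ1d V b]
            linarith [mul_le_mul_of_nonneg_left hJ (mul_nonneg hγ0.le (by linarith : (0:ℝ) ≤ 1-lam1)), mul_nonneg hl1.le (mul_nonneg (mul_nonneg hγ0.le hl0.le) hE0), hl1.le]
          have s1 : (lam1-lam0) * (T V m (b+1) - Q1 γ lam1 c1 V m b) ≤
              (lam1-lam0) * (Q1 γ lam1 c1 V m (b+1) - Q1 γ lam1 c1 V m b) := by
            apply mul_le_mul_of_nonneg_left _ hl10; linarith
          have s2 : lam1 * (Q1 γ lam1 c1 V (b+1) (b+1) - Q1 γ lam1 c1 V b b) ≤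
              lam1 * (Q1 γ lam1 c1 V (b+1) (b+1) - T V b b) := by
            apply mul_le_mul_of_nonneg_left _ hl1.le; linarith
          linarith
        · have t1 := hT1 V m (b+1)
          have t2 := hT2 V b b
          have core : (lam1-lam0) * (Q1 γ lam1 c1 V m (b+1) - Q1 γ lam1 c1 V m b) ≤
              lam1 * (Q2 γ lam2 c2 V (b+1) (b+1) - Q2 γ lam2 c2 V b b) := by
            rw [dQ1b V m b, dQ2d V b]
            linarith [mul_le_mul_of_nonneg_left hJ (mul_nonneg hγ0.le (by linarith : (0:ℝ) ≤ 1-lam1)), mul_nonneg hl1.le (mul_nonneg (mul_nonneg hγ0.le hl2.le) hw0), mul_nonneg hl1.le (mul_nonneg (mul_nonneg hγ0.le (by linarith : (0:ℝ) ≤ lam0-lam2)) hE0), hl1.le]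
          have s1 : (lam1-lam0) * (T V m (b+1) - Q1 γ lam1 c1 V m b) ≤
              (lam1-lam0) * (Q1 γ lam1 c1 V m (b+1) - Q1 γ lam1 c1 V m b) := by
            apply mul_le_mul_of_nonneg_left _ hl10; linarith
          have s2 : lam1 * (Q2 γ lam2 c2 V (b+1) (b+1) - Q2 γ lam2 c2 V b b) ≤
              lam1 * (Q2 γ lam2 c2 V (b+1) (b+1) - T V b b) := by
            apply mul_le_mul_of_nonneg_left _ hl1.le; linarith
          linarith
        · have t1 := hT2 V m (b+1)
          have t2 := hT0 V b b
          have core : (lam1-lam0) * (Q2 γ lam2 c2 V m (b+1) - Q2 γ lam2 c2 V m b) ≤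
              lam1 * (Q0 γ lam0 c0 V (b+1) (b+1) - Q0 γ lam0 c0 V b b) := by
            rw [dQ2b V m b, dQ0d V b]
            linarith [mul_le_mul_of_nonneg_left hJ (mul_nonneg hγ0.le (by linarith : (0:ℝ) ≤ 1-lam2)), mul_nonneg (mul_nonneg hγ0.le hl2.le) (mul_nonneg hl10 hw0), mul_nonneg (mul_nonneg hγ0.le (by nlinarith : (0:ℝ) ≤ lam0*lam1 - lam2*(lam1-lam0))) hw0, mul_le_mul_of_nonneg_left (mul_le_mul_of_nonneg_left hEU (mul_nonneg hγ0.le (by linarith : (0:ℝ) ≤ lam0-lam2))) hl1.le, mul_le_mul_of_nonneg_left hA2 hl1.le]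
          have s1 : (lam1-lam0) * (T V m (b+1) - Q2 γ lam2 c2 V m b) ≤
              (lam1-lam0) * (Q2 γ lam2 c2 V m (b+1) - Q2 γ lam2 c2 V m b) := by
            apply mul_le_mul_of_nonneg_left _ hl10; linarith
          have s2 : lam1 * (Q0 γ lam0 c0 V (b+1) (b+1) - Q0 γ lam0 c0 V b b) ≤
              lam1 * (Q0 γ lam0 c0 V (b+1) (b+1) - T V b b) := by
            apply mul_le_mul_of_nonneg_left _ hl1.le; linarith
          linarith
        · have t1 := hT2 V m (b+1)
          have t2 := hT1 V b b
          have core : (lam1-lam0) * (Q2 γ lam2 c2 V m (b+1) - Q2 γ lam2 c2 V m b) ≤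
              lam1 * (Q1 γ lam1 c1 V (b+1) (b+1) - Q1 γ lam1 c1 V b b) := by
            rw [dQ2b V m b, dQ1d V b]
            linarith [mul_le_mul_of_nonneg_left hJ (mul_nonneg hγ0.le (by linarith : (0:ℝ) ≤ 1-lam2)), mul_le_mul_of_nonneg_left hwE (mul_nonneg (mul_nonneg hγ0.le hl2.le) hl10), mul_nonneg (mul_nonneg (mul_nonneg hγ0.le hl2.le) hl0.le) hE0, hl1.le]
          have s1 : (lam1-lam0) * (T V m (b+1) - Q2 γ lam2 c2 V m b) ≤
              (lam1-lam0) * (Q2 γ lam2 c2 V m (b+1) - Q2 γ lam2 c2 V m b) := by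
            apply mul_le_mul_of_nonneg_left _ hl10; linarith
          have s2 : lam1 * (Q1 γ lam1 c1 V (b+1) (b+1) - Q1 γ lam1 c1 V b b) ≤
              lam1 * (Q1 γ lam1 c1 V (b+1) (b+1) - T V b b) := by
            apply mul_le_mul_of_nonneg_left _ hl1.le; linarith
          linarith
        · have t1 := hT2 V m (b+1)
          have t2 := hT2 V b b
          have core : (lam1-lam0) * (Q2 γ lam2 c2 V m (b+1) - Q2 γ lam2 c2 V m b) ≤
              lam1 * (Q2 γ lam2 c2 V (b+1) (b+1) - Q2 γ lam2 c2 V b b) := by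
            rw [dQ2b V m b, dQ2d V b]
            linarith [mul_le_mul_of_nonneg_left hJ (mul_nonneg hγ0.le (by linarith : (0:ℝ) ≤ 1-lam2)), mul_nonneg (mul_nonneg hγ0.le hl2.le) (mul_nonneg hl0.le hw0), hl1.le]
          have s1 : (lam1-lam0) * (T V m (b+1) - Q2 γ lam2 c2 V m b) ≤
              (lam1-lam0) * (Q2 γ lam2 c2 V m (b+1) - Q2 γ lam2 c2 V m b) := by
            apply mul_le_mul_of_nonneg_left _ hl10; linarith
          have s2 : lam1 * (Q2 γ lam2 c2 V (b+1) (b+1) - Q2 γ lam2 c2 V b b) ≤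
              lam1 * (Q2 γ lam2 c2 V (b+1) (b+1) - T V b b) := by
            apply mul_le_mul_of_nonneg_left _ hl1.le; linarith
          linarith
  -- contraction estimate for one application of T
  have hTdiff : ∀ (V V' : ℕ → ℕ → ℝ) (m b : ℕ) (M : ℝ), 0 ≤ M →
      |V (m+1) 1 - V' (m+1) 1| ≤ M → |V (m+1) (b+1) - V' (m+1) (b+1)| ≤ M →
      |V (b+1) (b+1) - V' (b+1) (b+1)| ≤ M → |V (b+1) 1 - V' (b+1) 1| ≤ M →
      |T V m b - T V' m b| ≤ γ * M := by
    intro V V' m b M hM h1 h2 h3 h4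
    have q0 : |Q0 γ lam0 c0 V m b - Q0 γ lam0 c0 V' m b| ≤ γ * M := by
      have e : Q0 γ lam0 c0 V m b - Q0 γ lam0 c0 V' m b =
          γ * (lam0 * (V (m+1) 1 - V' (m+1) 1) + (1-lam0) * (V (m+1) (b+1) - V' (m+1) (b+1))) := by
        simp only [Q0]; ring
      rw [e, abs_mul, abs_of_nonneg hγ0.le]
      have h5 : |lam0 * (V (m+1) 1 - V' (m+1) 1) + (1-lam0) * (V (m+1) (b+1) - V' (m+1) (b+1))| ≤
          lam0 * |V (m+1) 1 - V' (m+1) 1| + (1-lam0) * |V (m+1) (b+1) - V' (m+1) (b+1)| := by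
        refine (abs_add_le _ _).trans ?_
        rw [abs_mul, abs_mul, abs_of_nonneg hl0.le, abs_of_nonneg (by linarith : (0:ℝ) ≤ 1-lam0)]
      have h6 : lam0 * |V (m+1) 1 - V' (m+1) 1| ≤ lam0 * M := mul_le_mul_of_nonneg_left h1 hl0.le
      have h7 : (1-lam0) * |V (m+1) (b+1) - V' (m+1) (b+1)| ≤ (1-lam0) * M :=
        mul_le_mul_of_nonneg_left h2 (by linarith)
      have : |lam0 * (V (m+1) 1 - V' (m+1) 1) + (1-lam0) * (V (m+1) (b+1) - V' (m+1) (b+1))| ≤ M := by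
        linarith
      exact mul_le_mul_of_nonneg_left this hγ0.le
    have q1 : |Q1 γ lam1 c1 V m b - Q1 γ lam1 c1 V' m b| ≤ γ * M := by
      have e : Q1 γ lam1 c1 V m b - Q1 γ lam1 c1 V' m b =
          γ * (lam1 * (V (b+1) (b+1) - V' (b+1) (b+1)) + (1-lam1) * (V (m+1) (b+1) - V' (m+1) (b+1))) := by
        simp only [Q1]; ring
      rw [e, abs_mul, abs_of_nonneg hγ0.le]
      have h5 : |lam1 * (V (b+1) (b+1) - V' (b+1) (b+1)) + (1-lam1) * (V (m+1) (b+1) - V' (m+1) (b+1))| ≤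
          lam1 * |V (b+1) (b+1) - V' (b+1) (b+1)| + (1-lam1) * |V (m+1) (b+1) - V' (m+1) (b+1)| := by
        refine (abs_add_le _ _).trans ?_
        rw [abs_mul, abs_mul, abs_of_nonneg hl1.le, abs_of_nonneg (by linarith : (0:ℝ) ≤ 1-lam1)]
      have h6 : lam1 * |V (b+1) (b+1) - V' (b+1) (b+1)| ≤ lam1 * M := mul_le_mul_of_nonneg_left h3 hl1.le
      have h7 : (1-lam1) * |V (m+1) (b+1) - V' (m+1) (b+1)| ≤ (1-lam1) * M :=
        mul_le_mul_of_nonneg_left h2 (by linarith)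
      have : |lam1 * (V (b+1) (b+1) - V' (b+1) (b+1)) + (1-lam1) * (V (m+1) (b+1) - V' (m+1) (b+1))| ≤ M := by
        linarith
      exact mul_le_mul_of_nonneg_left this hγ0.le
    have q2 : |Q2 γ lam2 c2 V m b - Q2 γ lam2 c2 V' m b| ≤ γ * M := by
      have e : Q2 γ lam2 c2 V m b - Q2 γ lam2 c2 V' m b =
          γ * (lam2 * (V (b+1) 1 - V' (b+1) 1) + (1-lam2) * (V (m+1) (b+1) - V' (m+1) (b+1))) := by
        simp only [Q2]; ring
      rw [e, abs_mul, abs_of_nonneg hγ0.le]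
      have h5 : |lam2 * (V (b+1) 1 - V' (b+1) 1) + (1-lam2) * (V (m+1) (b+1) - V' (m+1) (b+1))| ≤
          lam2 * |V (b+1) 1 - V' (b+1) 1| + (1-lam2) * |V (m+1) (b+1) - V' (m+1) (b+1)| := by
        refine (abs_add_le _ _).trans ?_
        rw [abs_mul, abs_mul, abs_of_nonneg hl2.le, abs_of_nonneg (by linarith : (0:ℝ) ≤ 1-lam2)]
      have h6 : lam2 * |V (b+1) 1 - V' (b+1) 1| ≤ lam2 * M := mul_le_mul_of_nonneg_left h4 hl2.le
      have h7 : (1-lam2) * |V (m+1) (b+1) - V' (m+1) (b+1)| ≤ (1-lam2) * M :=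
        mul_le_mul_of_nonneg_left h2 (by linarith)
      have : |lam2 * (V (b+1) 1 - V' (b+1) 1) + (1-lam2) * (V (m+1) (b+1) - V' (m+1) (b+1))| ≤ M := by
        linarith
      exact mul_le_mul_of_nonneg_left this hγ0.le
    rw [abs_le]
    obtain ⟨q0a, q0b⟩ := abs_le.mp q0
    obtain ⟨q1a, q1b⟩ := abs_le.mp q1
    obtain ⟨q2a, q2b⟩ := abs_le.mp q2
    constructor
    · rcases hTc V m b with h | h | h <;> rw [h]
      · have t := hT0 V' m b; linarith
      · have t := hT1 V' m b; linarith
      · have t := hT2 V' m b; linarith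
    · rcases hTc V' m b with h | h | h <;> rw [h]
      · have t := hT0 V m b; linarith
      · have t := hT1 V m b; linarith
      · have t := hT2 V m b; linarith
  -- geometric convergence of the iterates to Vstar
  have hρ0 : (0:ℝ) < ρ := lt_trans one_pos hρ1
  have hγρ : γ * ρ < 1 := by
    have := (lt_div_iff₀ hγ0).mp hρ2; linarith
  have hγρ0 : (0:ℝ) ≤ γ * ρ := by positivity
  have hC0 : (0:ℝ) ≤ C := by
    have h := hC 1 1 le_rfl le_rfl
    have h2 := abs_nonneg (Vstar 1 1)
    nlinarith [hρ0]
  set K : ℝ := L / (ρ - 1) + C with hKdef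
  have hK0 : 0 ≤ K := by
    have h : (0:ℝ) ≤ L / (ρ-1) := le_of_lt (div_pos hLpos (by linarith))
    rw [hKdef]; linarith
  have hbnd : ∀ n m b, 1 ≤ b → b ≤ m → |W n m b - Vstar m b| ≤ K * (γ*ρ)^n * ρ^m := by
    intro n
    induction n with
    | zero =>
      intro m b hb hbm
      have hm : (m:ℝ) * (ρ-1) ≤ ρ^m := by
        have h := one_add_mul_le_pow (a := ρ-1) (by linarith) m
        have e : (1+(ρ-1))^m = ρ^m := by ring_nf
        nlinarith
      have habs : |W 0 m b - Vstar m b| ≤ |L * (m:ℝ)| + |Vstar m b| := by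
        rw [hW0]; simpa using abs_sub_le (L*(m:ℝ)) 0 (Vstar m b)
      have h1 : |L * (m:ℝ)| = L * m := by
        rw [abs_of_nonneg]; positivity
      have h2 : L * (m:ℝ) ≤ (L/(ρ-1)) * ρ^m := by
        have h2' : L * (m:ℝ) * (ρ-1) ≤ L * ρ^m := by
          calc L * (m:ℝ) * (ρ-1) = L * ((m:ℝ)*(ρ-1)) := by ring
            _ ≤ L * ρ^m := mul_le_mul_of_nonneg_left hm hLpos.le
        have h3' : L * (m:ℝ) ≤ L * ρ^m / (ρ-1) :=
          (le_div_iff₀ (by linarith : (0:ℝ) < ρ-1)).mpr h2'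
        have e2 : L * ρ^m / (ρ-1) = L/(ρ-1) * ρ^m := by ring
        linarith
      have h3 := hC m b hb hbm
      have e : K * (γ*ρ)^0 * ρ^m = (L/(ρ-1)) * ρ^m + C * ρ^m := by
        rw [pow_zero]; rw [hKdef]; ring
      rw [e]; linarith
    | succ n ih =>
      intro m b hb hbm
      have s1 := ih (m+1) 1 le_rfl (by omega)
      have s2 := ih (m+1) (b+1) (by omega) (by omega)
      have s3 := ih (b+1) (b+1) (by omega) (by omega)
      have s4 := ih (b+1) 1 le_rfl (by omega)
      have hKn : (0:ℝ) ≤ K * (γ*ρ)^n := by positivity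
      have hpow : ρ^(b+1) ≤ ρ^(m+1) := pow_le_pow_right₀ (by linarith) (by omega)
      have hM0 : (0:ℝ) ≤ K * (γ*ρ)^n * ρ^(m+1) := by positivity
      have s3' : |W n (b+1) (b+1) - Vstar (b+1) (b+1)| ≤ K * (γ*ρ)^n * ρ^(m+1) :=
        le_trans s3 (by nlinarith)
      have s4' : |W n (b+1) 1 - Vstar (b+1) 1| ≤ K * (γ*ρ)^n * ρ^(m+1) :=
        le_trans s4 (by nlinarith)
      have hfix' : Vstar m b = T Vstar m b := hfix m b hb hbm
      have := hTdiff (W n) Vstar m b (K * (γ*ρ)^n * ρ^(m+1)) hM0 s1 s2 s3' s4'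
      rw [← hWs n, ← hfix'] at this
      have e : γ * (K * (γ*ρ)^n * ρ^(m+1)) = K * (γ*ρ)^(n+1) * ρ^m := by
        rw [pow_succ, pow_succ]; ring
      linarith
  have hconv : ∀ m b, 1 ≤ b → b ≤ m →
      Filter.Tendsto (fun n => W n m b) Filter.atTop (nhds (Vstar m b)) := by
    intro m b hb hbm
    rw [tendsto_iff_dist_tendsto_zero]
    have h0 : Filter.Tendsto (fun n => (K * ρ^m) * (γ*ρ)^n) Filter.atTop (nhds 0) := by
      have := (tendsto_pow_atTop_nhds_zero_of_lt_one hγρ0 hγρ).const_mul (K * ρ^m)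
      simpa using this
    apply squeeze_zero (fun n => dist_nonneg) _ h0
    intro n
    rw [Real.dist_eq]
    calc |W n m b - Vstar m b| ≤ K * (γ*ρ)^n * ρ^m := hbnd n m b hb hbm
      _ = (K * ρ^m) * (γ*ρ)^n := by ring
  -- transfer the invariants to Vstar
  have Sd1 : ∀ m b, 1 ≤ b → b ≤ m → L ≤ Vstar (m+1) b - Vstar m b := by
    intro m b hb hbm
    have t := (hconv (m+1) b hb (by omega)).sub (hconv m b hb hbm)
    exact ge_of_tendsto t (Filter.Eventually.of_forall fun n => (good n).1 m b hb hbm)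
  have SdU : ∀ m b, 1 ≤ b → b ≤ m → Vstar (m+1) b - Vstar m b ≤ U := by
    intro m b hb hbm
    have t := (hconv (m+1) b hb (by omega)).sub (hconv m b hb hbm)
    exact le_of_tendsto t (Filter.Eventually.of_forall fun n => (good n).2.1 m b hb hbm)
  have Sb : ∀ m b, 1 ≤ b → b+1 ≤ m → 0 ≤ Vstar m (b+1) - Vstar m b := by
    intro m b hb hbm
    have t := (hconv m (b+1) (by omega) hbm).sub (hconv m b hb (by omega))
    exact ge_of_tendsto t (Filter.Eventually.of_forall fun n => (good n).2.2.1 m b hb hbm)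
  have SJ : ∀ m b, 1 ≤ b → b < m →
      (lam1-lam0) * (Vstar m (b+1) - Vstar m b) ≤ lam1 * (Vstar (b+1) (b+1) - Vstar b b) := by
    intro m b hb hbm
    have t1 := ((hconv m (b+1) (by omega) (by omega)).sub (hconv m b hb (by omega))).const_mul (lam1-lam0)
    have t2 := ((hconv (b+1) (b+1) (by omega) le_rfl).sub (hconv b b hb le_rfl)).const_mul lam1
    exact le_of_tendsto_of_tendsto' t1 t2 fun n => (good n).2.2.2.2.2 m b hb hbm
  -- Q-difference monotonicity for Vstar
  have h0d : ∀ m b, 1 ≤ b → b ≤ m → 0 ≤ Vstar (m+1) b - Vstar m b := by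
    intro m b hb hbm; have := Sd1 m b hb hbm; linarith
  have st01 : ∀ m b, 1 ≤ b → b ≤ m →
      Q1 γ lam1 c1 Vstar (m+1) b - Q0 γ lam0 c0 Vstar (m+1) b ≤
      Q1 γ lam1 c1 Vstar m b - Q0 γ lam0 c0 Vstar m b := by
    intro m b hb hbm
    have e1 := dQ1m Vstar m b; have e0 := dQ0m Vstar m b
    have f1 := h0d (m+1) 1 le_rfl (by omega)
    have f2 := h0d (m+1) (b+1) (by omega) (by omega)
    linarith [mul_nonneg (mul_nonneg hγ0.le hl0.le) f1,
      mul_nonneg (mul_nonneg hγ0.le (by linarith : (0:ℝ) ≤ lam1-lam0)) f2]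
  have st02 : ∀ m b, 1 ≤ b → b ≤ m →
      Q2 γ lam2 c2 Vstar (m+1) b - Q0 γ lam0 c0 Vstar (m+1) b ≤
      Q2 γ lam2 c2 Vstar m b - Q0 γ lam0 c0 Vstar m b := by
    intro m b hb hbm
    have e2 := dQ2m Vstar m b; have e0 := dQ0m Vstar m b
    have f1 := Sd1 (m+1) 1 le_rfl (by omega)
    have f2 := SdU (m+1) (b+1) (by omega) (by omega)
    linarith [mul_le_mul_of_nonneg_left f2 (mul_nonneg hγ0.le (by linarith : (0:ℝ) ≤ lam0-lam2)),
      mul_le_mul_of_nonneg_left hA1 hγ0.le,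
      mul_le_mul_of_nonneg_left f1 (mul_nonneg hγ0.le hl0.le)]
  have st12 : ∀ m b, 1 ≤ b → b ≤ m →
      Q1 γ lam1 c1 Vstar (m+1) b - Q2 γ lam2 c2 Vstar (m+1) b ≤
      Q1 γ lam1 c1 Vstar m b - Q2 γ lam2 c2 Vstar m b := by
    intro m b hb hbm
    have e1 := dQ1m Vstar m b; have e2 := dQ2m Vstar m b
    have f2 := h0d (m+1) (b+1) (by omega) (by omega)
    linarith [mul_nonneg (mul_nonneg hγ0.le (by linarith : (0:ℝ) ≤ lam1-lam2)) f2]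
  have stb1 : ∀ m b, 1 ≤ b → b < m →
      Q1 γ lam1 c1 Vstar m b - Q0 γ lam0 c0 Vstar m b ≤
      Q1 γ lam1 c1 Vstar m (b+1) - Q0 γ lam0 c0 Vstar m (b+1) := by
    intro m b hb hbm
    have e1 := dQ1b Vstar m b; have e0 := dQ0b Vstar m b
    have hJ := SJ (m+1) (b+1) (by omega) (by omega)
    linarith [mul_le_mul_of_nonneg_left hJ hγ0.le]
  have stb2 : ∀ m b, 1 ≤ b → b < m →
      Q2 γ lam2 c2 Vstar m b - Q0 γ lam0 c0 Vstar m b ≤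
      Q2 γ lam2 c2 Vstar m (b+1) - Q0 γ lam0 c0 Vstar m (b+1) := by
    intro m b hb hbm
    have e2 := dQ2b Vstar m b; have e0 := dQ0b Vstar m b
    have f1 := h0d (b+1) 1 le_rfl (by omega)
    have f2 := Sb (m+1) (b+1) (by omega) (by omega)
    linarith [mul_nonneg (mul_nonneg hγ0.le hl2.le) f1,
      mul_nonneg (mul_nonneg hγ0.le (by linarith : (0:ℝ) ≤ lam0-lam2)) f2]
  -- monotonicity in the b-argument of Vstar
  have hmono : ∀ (M c c' : ℕ), 1 ≤ c → c ≤ c' → c' ≤ M → Vstar M c ≤ Vstar M c' := by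
    intro M c c' hc hcc' hc'M
    induction c' with
    | zero => omega
    | succ k ih =>
      by_cases hck : c = k+1
      · subst hck; exact le_rfl
      · have hck' : c ≤ k := by omega
        have h1 := ih hck' (by omega)
        have h2 := Sb M k (by omega) (by omega)
        linarith
  have hdiagF : ∀ b, 1 ≤ b →
      Q0 γ lam0 c0 Vstar b b ≤ Q1 γ lam1 c1 Vstar b b ∧
      Q0 γ lam0 c0 Vstar b b ≤ Q2 γ lam2 c2 Vstar b b := by
    intro b hb
    have hEV : Vstar (b+1) 1 ≤ Vstar (b+1) (b+1) := hmono (b+1) 1 (b+1) le_rfl (by omega) le_rfl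
    have eF1 : Q1 γ lam1 c1 Vstar b b - Q0 γ lam0 c0 Vstar b b =
        c1 - c0 + γ * (lam0 * (Vstar (b+1) (b+1) - Vstar (b+1) 1)) := by
      simp only [Q0, Q1]; ring
    have eF2 : Q2 γ lam2 c2 Vstar b b - Q0 γ lam0 c0 Vstar b b =
        c2 - c0 + γ * ((lam0-lam2) * (Vstar (b+1) (b+1) - Vstar (b+1) 1)) := by
      simp only [Q0, Q2]; ring
    constructor
    · linarith [mul_nonneg (mul_nonneg hγ0.le hl0.le) (by linarith : (0:ℝ) ≤ Vstar (b+1) (b+1) - Vstar (b+1) 1)]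
    · linarith [mul_nonneg (mul_nonneg hγ0.le (by linarith : (0:ℝ) ≤ lam0-lam2)) (by linarith : (0:ℝ) ≤ Vstar (b+1) (b+1) - Vstar (b+1) 1)]
  -- telescoped monotonicity
  have M01 : ∀ b m n, 1 ≤ b → b ≤ m → m ≤ n →
      Q1 γ lam1 c1 Vstar n b - Q0 γ lam0 c0 Vstar n b ≤
      Q1 γ lam1 c1 Vstar m b - Q0 γ lam0 c0 Vstar m b := by
    intro b m n hb hbm
    induction n with
    | zero => intro h; have : m = 0 := by omega
              subst this; exact le_rfl
    | succ k ih =>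
      intro h
      by_cases hmk : m = k+1
      · subst hmk; exact le_rfl
      · have h1 := ih (by omega)
        have h2 := st01 k b hb (by omega)
        linarith
  have M02 : ∀ b m n, 1 ≤ b → b ≤ m → m ≤ n →
      Q2 γ lam2 c2 Vstar n b - Q0 γ lam0 c0 Vstar n b ≤
      Q2 γ lam2 c2 Vstar m b - Q0 γ lam0 c0 Vstar m b := by
    intro b m n hb hbm
    induction n with
    | zero => intro h; have : m = 0 := by omega
              subst this; exact le_rfl
    | succ k ih =>
      intro h
      by_cases hmk : m = k+1
      · subst hmk; exact le_rfl
      · have h1 := ih (by omega)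
        have h2 := st02 k b hb (by omega)
        linarith
  have M12 : ∀ b m n, 1 ≤ b → b ≤ m → m ≤ n →
      Q1 γ lam1 c1 Vstar n b - Q2 γ lam2 c2 Vstar n b ≤
      Q1 γ lam1 c1 Vstar m b - Q2 γ lam2 c2 Vstar m b := by
    intro b m n hb hbm
    induction n with
    | zero => intro h; have : m = 0 := by omega
              subst this; exact le_rfl
    | succ k ih =>
      intro h
      by_cases hmk : m = k+1
      · subst hmk; exact le_rfl
      · have h1 := ih (by omega)
        have h2 := st12 k b hb (by omega)
        linarith
  have Mb1 : ∀ n b b', 1 ≤ b → b ≤ b' → b' ≤ n →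
      Q1 γ lam1 c1 Vstar n b - Q0 γ lam0 c0 Vstar n b ≤
      Q1 γ lam1 c1 Vstar n b' - Q0 γ lam0 c0 Vstar n b' := by
    intro n b b' hb hbb'
    induction b' with
    | zero => intro h; omega
    | succ k ih =>
      intro h
      by_cases hbk : b = k+1
      · subst hbk; exact le_rfl
      · have h1 := ih (by omega) (by omega)
        have h2 := stb1 n k (by omega) (by omega)
        linarith
  have Mb2 : ∀ n b b', 1 ≤ b → b ≤ b' → b' ≤ n →
      Q2 γ lam2 c2 Vstar n b - Q0 γ lam0 c0 Vstar n b ≤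
      Q2 γ lam2 c2 Vstar n b' - Q0 γ lam0 c0 Vstar n b' := by
    intro n b b' hb hbb'
    induction b' with
    | zero => intro h; omega
    | succ k ih =>
      intro h
      by_cases hbk : b = k+1
      · subst hbk; exact le_rfl
      · have h1 := ih (by omega) (by omega)
        have h2 := stb2 n k (by omega) (by omega)
        linarith
  -- ℕ∞ supremum helpers
  have hintro : ∀ (A : Set ℕ) (n : ℕ), n ∈ A →
      (n : ℕ∞) ≤ sSup ((fun k : ℕ => (k : ℕ∞)) '' A) := by
    intro A n hn; exact le_sSup ⟨n, hn, rfl⟩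
  have helim : ∀ (A : Set ℕ) (m : ℕ), 1 ≤ m →
      (m : ℕ∞) ≤ sSup ((fun k : ℕ => (k : ℕ∞)) '' A) → ∃ n ∈ A, m ≤ n := by
    intro A m hm hle
    by_contra hc
    push_neg at hc
    have hb : sSup ((fun k : ℕ => (k : ℕ∞)) '' A) ≤ ((m-1 : ℕ) : ℕ∞) := by
      apply sSup_le
      rintro x ⟨n, hn, rfl⟩
      have hnm := hc n hn
      show (n : ℕ∞) ≤ ((m-1 : ℕ) : ℕ∞)
      exact_mod_cast (by omega : n ≤ m-1)
    have h2 : (m : ℕ∞) ≤ ((m-1 : ℕ) : ℕ∞) := le_trans hle hb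
    have h3 : m ≤ m-1 := by exact_mod_cast h2
    omega
  -- the thresholds
  refine ⟨fun b => sSup ((fun k : ℕ => (k : ℕ∞)) '' {n : ℕ | b ≤ n ∧
      Q0 γ lam0 c0 Vstar n b ≤ Q1 γ lam1 c1 Vstar n b ∧
      Q0 γ lam0 c0 Vstar n b ≤ Q2 γ lam2 c2 Vstar n b}),
    fun b => max (sSup ((fun k : ℕ => (k : ℕ∞)) '' {n : ℕ | b ≤ n ∧
      Q0 γ lam0 c0 Vstar n b ≤ Q1 γ lam1 c1 Vstar n b ∧
      Q0 γ lam0 c0 Vstar n b ≤ Q2 γ lam2 c2 Vstar n b}))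
      (sSup ((fun k : ℕ => (k : ℕ∞)) '' {n : ℕ | b ≤ n ∧
      Q2 γ lam2 c2 Vstar n b ≤ Q1 γ lam1 c1 Vstar n b})), ?_, ?_, ?_⟩
  · -- b ≤ τ1 b and τ1 b ≤ τ2 b
    intro b hb
    refine ⟨?_, le_max_left _ _⟩
    exact hintro _ b ⟨le_rfl, (hdiagF b hb).1, (hdiagF b hb).2⟩
  · -- τ1 nondecreasing
    intro b b' hb hbb'
    apply sSup_le
    rintro x ⟨n, hn, rfl⟩
    obtain ⟨hbn, h1, h2⟩ := hn
    by_cases hb'n : b' ≤ n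
    · apply hintro
      refine ⟨hb'n, ?_, ?_⟩
      · have := Mb1 n b b' hb hbb' hb'n; linarith
      · have := Mb2 n b b' hb hbb' hb'n; linarith
    · have hcast : (n : ℕ∞) ≤ (b' : ℕ∞) := by exact_mod_cast (by omega : n ≤ b')
      refine le_trans hcast ?_
      exact hintro _ b' ⟨le_rfl, (hdiagF b' (by omega)).1, (hdiagF b' (by omega)).2⟩
  · -- the three regions
    intro m b hb hbm
    refine ⟨?_, ?_, ?_⟩
    · -- sensing region
      intro hm1
      obtain ⟨n, hn, hmn⟩ := helim _ m (by omega) hm1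
      obtain ⟨hbn, h1, h2⟩ := hn
      constructor
      · have := M01 b m n hb hbm hmn; linarith
      · have := M02 b m n hb hbm hmn; linarith
    · -- joint region
      intro hlt hle2
      have hm0 : m ∉ {n : ℕ | b ≤ n ∧
          Q0 γ lam0 c0 Vstar n b ≤ Q1 γ lam1 c1 Vstar n b ∧
          Q0 γ lam0 c0 Vstar n b ≤ Q2 γ lam2 c2 Vstar n b} := by
        intro hmem
        exact absurd (hintro _ m hmem) (not_le.mpr hlt)
      have hcase : Q1 γ lam1 c1 Vstar m b < Q0 γ lam0 c0 Vstar m b ∨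
          Q2 γ lam2 c2 Vstar m b < Q0 γ lam0 c0 Vstar m b := by
        rcases le_or_gt (Q0 γ lam0 c0 Vstar m b) (Q1 γ lam1 c1 Vstar m b) with ha | ha
        · rcases le_or_gt (Q0 γ lam0 c0 Vstar m b) (Q2 γ lam2 c2 Vstar m b) with hb' | hb'
          · exact absurd ⟨hbm, ha, hb'⟩ hm0
          · exact Or.inr hb'
        · exact Or.inl ha
      have h21 : Q2 γ lam2 c2 Vstar m b ≤ Q1 γ lam1 c1 Vstar m b := by
        rcases le_max_iff.mp hle2 with h | h
        · exact absurd h (not_le.mpr hlt)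
        · obtain ⟨n, hn, hmn⟩ := helim _ m (by omega) h
          obtain ⟨hbn, hq⟩ := hn
          have := M12 b m n hb hbm hmn; linarith
      constructor
      · rcases hcase with h | h
        · linarith
        · linarith
      · exact h21
    · -- communication region
      intro hlt2
      rw [max_lt_iff] at hlt2
      obtain ⟨hlt, hlt'⟩ := hlt2
      have hm0 : m ∉ {n : ℕ | b ≤ n ∧
          Q0 γ lam0 c0 Vstar n b ≤ Q1 γ lam1 c1 Vstar n b ∧
          Q0 γ lam0 c0 Vstar n b ≤ Q2 γ lam2 c2 Vstar n b} := by
        intro hmem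
        exact absurd (hintro _ m hmem) (not_le.mpr hlt)
      have hm2 : m ∉ {n : ℕ | b ≤ n ∧
          Q2 γ lam2 c2 Vstar n b ≤ Q1 γ lam1 c1 Vstar n b} := by
        intro hmem
        exact absurd (hintro _ m hmem) (not_le.mpr hlt')
      have h12 : Q1 γ lam1 c1 Vstar m b < Q2 γ lam2 c2 Vstar m b := by
        rcases le_or_gt (Q2 γ lam2 c2 Vstar m b) (Q1 γ lam1 c1 Vstar m b) with h | h
        · exact absurd ⟨hbm, h⟩ hm2
        · exact h
      have hcase : Q1 γ lam1 c1 Vstar m b < Q0 γ lam0 c0 Vstar m b ∨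
          Q2 γ lam2 c2 Vstar m b < Q0 γ lam0 c0 Vstar m b := by
        rcases le_or_gt (Q0 γ lam0 c0 Vstar m b) (Q1 γ lam1 c1 Vstar m b) with ha | ha
        · rcases le_or_gt (Q0 γ lam0 c0 Vstar m b) (Q2 γ lam2 c2 Vstar m b) with hb' | hb'
          · exact absurd ⟨hbm, ha, hb'⟩ hm0
          · exact Or.inr hb'
        · exact Or.inl ha
      constructor
      · rcases hcase with h | h
        · linarith
        · linarith
      · linarith
end

section
/- Let V★ be the optimal value function of the unbounded problem and let V_A be the unique fixed point of the truncated Bellman operator T_A on S_A. Then the truncation error at the initial state satisfies V★(1,1) − V_A(1,1) ≤ γ^A/(1−γ)². -/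
/-- The truncated (clipped) Bellman operator `T_A` on the truncated state space
`S_A = {(m,b) : 1 ≤ b ≤ m ≤ A}`. -/
noncomputable def TbellTrunc (γ lam0 lam1 lam2 c0 c1 c2 : ℝ) (A : ℕ)
    (V : ℕ → ℕ → ℝ) (m b : ℕ) : ℝ :=
  min ((m : ℝ) + c0 + γ * (lam0 * V (min (m + 1) A) 1 +
        (1 - lam0) * V (min (m + 1) A) (min (b + 1) A)))
    (min ((m : ℝ) + c1 + γ * (lam1 * V (min (b + 1) A) (min (b + 1) A) +
        (1 - lam1) * V (min (m + 1) A) (min (b + 1) A)))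
      ((m : ℝ) + c2 + γ * (lam2 * V (min (b + 1) A) 1 +
        (1 - lam2) * V (min (m + 1) A) (min (b + 1) A))))

lemma min3_diff {a b c a' b' c' e : ℝ} (ha : a - a' ≤ e) (hb : b - b' ≤ e) (hc : c - c' ≤ e) :
    min a (min b c) - min a' (min b' c') ≤ e := by
  have h1 : min a (min b c) ≤ min (a' + e) (min (b' + e) (c' + e)) :=
    min_le_min (by linarith) (min_le_min (by linarith) (by linarith))
  have h2 : min (a' + e) (min (b' + e) (c' + e)) = min a' (min b' c') + e := by
    rw [min_add_add_right, min_add_add_right]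
  linarith

lemma comb {l x y e : ℝ} (h0 : 0 ≤ l) (h1 : l ≤ 1) (hx : x ≤ e) (hy : y ≤ e) :
    l * x + (1 - l) * y ≤ e := by nlinarith

lemma shift_bound (γ lam0 lam1 lam2 c0 c1 c2 ρ C : ℝ)
    (hγ0 : 0 < γ) (hγ1 : γ < 1)
    (hl0 : 0 ≤ lam0) (hl0' : lam0 ≤ 1) (hl1 : 0 ≤ lam1) (hl1' : lam1 ≤ 1)
    (hl2 : 0 ≤ lam2) (hl2' : lam2 ≤ 1)
    (hρ1 : 1 < ρ) (hγρ : γ * ρ < 1)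
    (Vstar : ℕ → ℕ → ℝ)
    (hC : ∀ m b : ℕ, 1 ≤ b → b ≤ m → |Vstar m b| ≤ C * ρ ^ m)
    (hfix : ∀ m b : ℕ, 1 ≤ b → b ≤ m →
      Vstar m b = Tbell γ lam0 lam1 lam2 c0 c1 c2 Vstar m b)
    (m b c : ℕ) (hb : 1 ≤ b) (hbm : b ≤ m) (hc : c = b ∨ (b = m ∧ c = m + 1)) :
    Vstar (m + 1) c - Vstar m b ≤ 1 / (1 - γ) := by
  have hρ0 : (0:ℝ) < ρ := lt_trans one_pos hρ1
  have hγρ0 : (0:ℝ) ≤ γ * ρ := le_of_lt (mul_pos hγ0 hρ0)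
  have h1γ : (0:ℝ) < 1 - γ := by linarith
  have hC0 : 0 ≤ C := by
    have h := (abs_nonneg (Vstar 1 1)).trans (hC 1 1 le_rfl le_rfl)
    rw [pow_one] at h
    nlinarith
  have key : ∀ k : ℕ, ∀ m b c : ℕ, 1 ≤ b → b ≤ m → (c = b ∨ (b = m ∧ c = m + 1)) →
      Vstar (m + 1) c - Vstar m b ≤ 1 / (1 - γ) + 2 * C * ρ ^ (m + 1) * (γ * ρ) ^ k := by
    intro k
    induction k with
    | zero =>
      intro m b c hb hbm hc
      have hc1 : 1 ≤ c := by rcases hc with h | ⟨h1, h2⟩ <;> omega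
      have hc2 : c ≤ m + 1 := by rcases hc with h | ⟨h1, h2⟩ <;> omega
      have h1 := hC (m + 1) c hc1 hc2
      have h2 := hC m b hb hbm
      have h3 : C * ρ ^ m ≤ C * ρ ^ (m + 1) :=
        mul_le_mul_of_nonneg_left (pow_le_pow_right₀ (le_of_lt hρ1) (Nat.le_succ m)) hC0
      have h4 := le_abs_self (Vstar (m + 1) c)
      have h5 := neg_abs_le (Vstar m b)
      have h6 : (0:ℝ) < 1 / (1 - γ) := by positivity
      simp only [pow_zero, mul_one]
      linarith
    | succ k ih =>
      intro m b c hb hbm hc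
      have hc1 : 1 ≤ c := by rcases hc with h | ⟨h1, h2⟩ <;> omega
      have hc2 : c ≤ m + 1 := by rcases hc with h | ⟨h1, h2⟩ <;> omega
      set E : ℝ := 1 / (1 - γ) + 2 * C * ρ ^ (m + 1 + 1) * (γ * ρ) ^ k with hE
      have hEaux : (0:ℝ) ≤ 2 * C * ρ ^ (m + 1 + 1) * (γ * ρ) ^ k :=
        mul_nonneg (mul_nonneg (by linarith) (pow_nonneg hρ0.le _)) (pow_nonneg hγρ0 _)
      have hE0 : 0 ≤ E := by
        have h6 : (0:ℝ) < 1 / (1 - γ) := by positivity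
        rw [hE]; linarith
      have d1 : Vstar (m + 1 + 1) 1 - Vstar (m + 1) 1 ≤ E := by
        rw [hE]; exact ih (m + 1) 1 1 le_rfl (by omega) (Or.inl rfl)
      have d2 : Vstar (m + 1 + 1) (c + 1) - Vstar (m + 1) (b + 1) ≤ E := by
        rw [hE]
        refine ih (m + 1) (b + 1) (c + 1) (by omega) (by omega) ?_
        rcases hc with h | ⟨h1, h2⟩
        · exact Or.inl (by omega)
        · exact Or.inr ⟨by omega, by omega⟩
      have d3 : Vstar (c + 1) (c + 1) - Vstar (b + 1) (b + 1) ≤ E := by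
        rcases hc with h | ⟨h1, h2⟩
        · subst h; linarith
        · rw [h2, h1, hE]
          exact ih (m + 1) (m + 1) (m + 1 + 1) (by omega) le_rfl (Or.inr ⟨rfl, rfl⟩)
      have d4 : Vstar (c + 1) 1 - Vstar (b + 1) 1 ≤ E := by
        rcases hc with h | ⟨h1, h2⟩
        · subst h; linarith
        · rw [h2, h1, hE]
          exact ih (m + 1) 1 1 le_rfl (by omega) (Or.inl rfl)
      rw [hfix (m + 1) c hc1 hc2, hfix m b hb hbm]
      simp only [Tbell, Q0, Q1, Q2]
      refine le_trans (min3_diff (e := 1 + γ * E) ?_ ?_ ?_) ?_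
      · have hcomb := comb hl0 hl0' d1 d2
        have hγc := mul_le_mul_of_nonneg_left hcomb hγ0.le
        push_cast
        linarith
      · have hcomb := comb hl1 hl1' d3 d2
        have hγc := mul_le_mul_of_nonneg_left hcomb hγ0.le
        push_cast
        linarith
      · have hcomb := comb hl2 hl2' d4 d2
        have hγc := mul_le_mul_of_nonneg_left hcomb hγ0.le
        push_cast
        linarith
      · refine le_of_eq ?_
        rw [hE]
        have hne : (1:ℝ) - γ ≠ 0 := by linarith
        field_simp
        ring
  have htend : Filter.Tendsto
      (fun k : ℕ => 1 / (1 - γ) + 2 * C * ρ ^ (m + 1) * (γ * ρ) ^ k)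
      Filter.atTop (nhds (1 / (1 - γ))) := by
    have h := tendsto_pow_atTop_nhds_zero_of_lt_one hγρ0 hγρ
    have h2 := Filter.Tendsto.const_add (1 / (1 - γ))
      ((h.const_mul (2 * C * ρ ^ (m + 1))))
    simpa using h2
  exact ge_of_tendsto' htend (fun k => key k m b c hb hbm hc)

/-- If `V★` is the optimal value function of the unbounded problem and
`V_A` is the fixed point of the truncated Bellman operator `T_A`, then the truncation
error at the initial state `(1,1)` satisfies `V★(1,1) − V_A(1,1) ≤ γ^A/(1−γ)²`. -/
theorem truncation_error_bound
    (γ lam0 lam1 lam2 c0 c1 c2 ρ : ℝ)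
    (hγ0 : 0 < γ) (hγ1 : γ < 1)
    (hl0 : 0 < lam0) (hl0' : lam0 < 1)
    (hl1 : 0 < lam1) (hl1' : lam1 < 1)
    (hl2 : 0 < lam2) (hl2' : lam2 < 1)
    (hc0 : 0 ≤ c0) (hc1 : 0 ≤ c1) (hc2 : 0 ≤ c2)
    (hρ1 : 1 < ρ) (hρ2 : ρ < 1 / γ)
    (Vstar : ℕ → ℕ → ℝ)
    (hnorm : ∃ C : ℝ, ∀ m b : ℕ, 1 ≤ b → b ≤ m → |Vstar m b| ≤ C * ρ ^ m)
    (hfix : ∀ m b : ℕ, 1 ≤ b → b ≤ m →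
      Vstar m b = Tbell γ lam0 lam1 lam2 c0 c1 c2 Vstar m b)
    (A : ℕ) (hA : 1 ≤ A)
    (VA : ℕ → ℕ → ℝ)
    (hfixA : ∀ m b : ℕ, 1 ≤ b → b ≤ m → m ≤ A →
      VA m b = TbellTrunc γ lam0 lam1 lam2 c0 c1 c2 A VA m b) :
    Vstar 1 1 - VA 1 1 ≤ γ ^ A / (1 - γ) ^ 2 := by
  obtain ⟨C, hC⟩ := hnorm
  have h1γ : (0:ℝ) < 1 - γ := by linarith
  have hγρ : γ * ρ < 1 := by
    have h := (lt_div_iff₀ hγ0).mp hρ2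
    linarith [mul_comm γ ρ]
  have shift := shift_bound γ lam0 lam1 lam2 c0 c1 c2 ρ C hγ0 hγ1 hl0.le hl0'.le
    hl1.le hl1'.le hl2.le hl2'.le hρ1 hγρ Vstar hC hfix
  -- uniform upper bound on the error over the finite truncated state space
  set s : Finset (ℕ × ℕ) := Finset.Icc 1 A ×ˢ Finset.Icc 1 A with hs
  have hne : s.Nonempty := ⟨(1, 1), by simp [hs, Finset.mem_product, Finset.mem_Icc, hA]⟩
  set B : ℝ := s.sup' hne (fun p => Vstar p.1 p.2 - VA p.1 p.2) with hB
  have hBle : ∀ m b : ℕ, 1 ≤ b → b ≤ m → m ≤ A → Vstar m b - VA m b ≤ B := by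
    intro m b h1 h2 h3
    have hmem : (m, b) ∈ s := by
      simp only [hs, Finset.mem_product, Finset.mem_Icc]
      omega
    exact Finset.le_sup' (fun p : ℕ × ℕ => Vstar p.1 p.2 - VA p.1 p.2) hmem
  have main : ∀ n : ℕ, ∀ m b : ℕ, 1 ≤ b → b ≤ m → m ≤ A →
      Vstar m b - VA m b ≤ γ ^ (A - m + 1) / (1 - γ) ^ 2 + γ ^ n * B := by
    intro n
    induction n with
    | zero =>
      intro m b h1 h2 h3
      have h4 := hBle m b h1 h2 h3
      have h5 : (0:ℝ) ≤ γ ^ (A - m + 1) / (1 - γ) ^ 2 :=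
        div_nonneg (pow_nonneg hγ0.le _) (sq_nonneg _)
      simp only [pow_zero, one_mul]
      linarith
    | succ n ih =>
      intro m b h1 h2 h3
      rw [hfix m b h1 h2, hfixA m b h1 h2 h3]
      simp only [Tbell, Q0, Q1, Q2, TbellTrunc]
      rcases lt_or_eq_of_le h3 with hlt | heq
      · -- m < A : no clipping happens
        rw [min_eq_left (by omega : m + 1 ≤ A), min_eq_left (by omega : b + 1 ≤ A)]
        set E : ℝ := γ ^ (A - (m + 1) + 1) / (1 - γ) ^ 2 + γ ^ n * B with hE
        have d1 : Vstar (m + 1) 1 - VA (m + 1) 1 ≤ E := by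
          rw [hE]; exact ih (m + 1) 1 le_rfl (by omega) (by omega)
        have d2 : Vstar (m + 1) (b + 1) - VA (m + 1) (b + 1) ≤ E := by
          rw [hE]; exact ih (m + 1) (b + 1) (by omega) (by omega) (by omega)
        have hmono : ∀ j : ℕ, A - (m + 1) + 1 ≤ j →
            γ ^ j / (1 - γ) ^ 2 + γ ^ n * B ≤ E := by
          intro j hj
          have hp := pow_le_pow_of_le_one hγ0.le hγ1.le hj
          have hd := (div_le_div_iff_of_pos_right (by positivity : (0:ℝ) < (1 - γ) ^ 2)).mpr hp
          rw [hE]; linarith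
        have d3 : Vstar (b + 1) (b + 1) - VA (b + 1) (b + 1) ≤ E := by
          have := ih (b + 1) (b + 1) (by omega) le_rfl (by omega)
          exact this.trans (hmono _ (by omega))
        have d4 : Vstar (b + 1) 1 - VA (b + 1) 1 ≤ E := by
          have := ih (b + 1) 1 le_rfl (by omega) (by omega)
          exact this.trans (hmono _ (by omega))
        refine le_trans (min3_diff (e := γ * E) ?_ ?_ ?_) ?_
        · have hcomb := comb hl0.le hl0'.le d1 d2
          have hγc := mul_le_mul_of_nonneg_left hcomb hγ0.le
          linarith
        · have hcomb := comb hl1.le hl1'.le d3 d2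
          have hγc := mul_le_mul_of_nonneg_left hcomb hγ0.le
          linarith
        · have hcomb := comb hl2.le hl2'.le d4 d2
          have hγc := mul_le_mul_of_nonneg_left hcomb hγ0.le
          linarith
        · refine le_of_eq ?_
          rw [hE]
          have hexp : A - m + 1 = (A - (m + 1) + 1) + 1 := by omega
          rw [hexp, pow_succ γ (A - (m + 1) + 1), pow_succ γ n]
          ring
      · -- m = A : clipping kicks in, use the shift lemma
        subst heq
        rw [min_eq_right (Nat.le_succ m)]
        set E : ℝ := 1 / (1 - γ) + γ ^ (m - m + 1) / (1 - γ) ^ 2 + γ ^ n * B with hE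
        have hshift0 : (0:ℝ) ≤ 1 / (1 - γ) := by positivity
        have d1 : Vstar (m + 1) 1 - VA m 1 ≤ E := by
          have hs1 := shift m 1 1 le_rfl (by omega) (Or.inl rfl)
          have hi1 := ih m 1 le_rfl (by omega) le_rfl
          rw [hE]; linarith
        have hmono : ∀ j : ℕ, m - m + 1 ≤ j →
            γ ^ j / (1 - γ) ^ 2 + γ ^ n * B ≤ E := by
          intro j hj
          have hp := pow_le_pow_of_le_one hγ0.le hγ1.le hj
          have hd := (div_le_div_iff_of_pos_right (by positivity : (0:ℝ) < (1 - γ) ^ 2)).mpr hp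
          rw [hE]; linarith
        rcases lt_or_eq_of_le h2 with hblt | hbeq
        · -- b < A = m
          rw [min_eq_left (by omega : b + 1 ≤ m)]
          have d2 : Vstar (m + 1) (b + 1) - VA m (b + 1) ≤ E := by
            have hs2 := shift m (b + 1) (b + 1) (by omega) (by omega) (Or.inl rfl)
            have hi2 := ih m (b + 1) (by omega) (by omega) le_rfl
            rw [hE]; linarith
          have d3 : Vstar (b + 1) (b + 1) - VA (b + 1) (b + 1) ≤ E := by
            have := ih (b + 1) (b + 1) (by omega) le_rfl (by omega)
            exact this.trans (hmono _ (by omega))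
          have d4 : Vstar (b + 1) 1 - VA (b + 1) 1 ≤ E := by
            have := ih (b + 1) 1 le_rfl (by omega) (by omega)
            exact this.trans (hmono _ (by omega))
          refine le_trans (min3_diff (e := γ * E) ?_ ?_ ?_) ?_
          · have hcomb := comb hl0.le hl0'.le d1 d2
            have hγc := mul_le_mul_of_nonneg_left hcomb hγ0.le
            linarith
          · have hcomb := comb hl1.le hl1'.le d3 d2
            have hγc := mul_le_mul_of_nonneg_left hcomb hγ0.le
            linarith
          · have hcomb := comb hl2.le hl2'.le d4 d2
            have hγc := mul_le_mul_of_nonneg_left hcomb hγ0.le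
            linarith
          · refine le_of_eq ?_
            rw [hE]
            have hexp : m - m + 1 = 1 := by omega
            rw [hexp, pow_one, pow_succ γ n]
            field_simp
            ring
        · -- b = A = m
          subst hbeq
          rw [min_eq_right (Nat.le_succ b)]
          have d2 : Vstar (b + 1) (b + 1) - VA b b ≤ E := by
            have hs2 := shift b b (b + 1) (by omega) le_rfl (Or.inr ⟨rfl, rfl⟩)
            have hi2 := ih b b (by omega) le_rfl le_rfl
            rw [hE]; linarith
          refine le_trans (min3_diff (e := γ * E) ?_ ?_ ?_) ?_
          · have hcomb := comb hl0.le hl0'.le d1 d2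
            have hγc := mul_le_mul_of_nonneg_left hcomb hγ0.le
            linarith
          · have hcomb := comb hl1.le hl1'.le d2 d2
            have hγc := mul_le_mul_of_nonneg_left hcomb hγ0.le
            linarith
          · have hcomb := comb hl2.le hl2'.le d1 d2
            have hγc := mul_le_mul_of_nonneg_left hcomb hγ0.le
            linarith
          · refine le_of_eq ?_
            rw [hE]
            have hexp : b - b + 1 = 1 := by omega
            rw [hexp, pow_one, pow_succ γ n]
            field_simp
            ring
  have htend : Filter.Tendsto
      (fun n : ℕ => γ ^ (A - 1 + 1) / (1 - γ) ^ 2 + γ ^ n * B)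
      Filter.atTop (nhds (γ ^ (A - 1 + 1) / (1 - γ) ^ 2)) := by
    have h := tendsto_pow_atTop_nhds_zero_of_lt_one hγ0.le hγ1
    have h2 := Filter.Tendsto.const_add (γ ^ (A - 1 + 1) / (1 - γ) ^ 2) (h.mul_const B)
    simpa using h2
  have hfin := ge_of_tendsto' htend (fun n => main n 1 1 le_rfl le_rfl hA)
  have hAe : A - 1 + 1 = A := by omega
  rwa [hAe] at hfin
end

section
/- Assume λ2 ≤ λ0 ≤ λ1 and γ ≤ 1/(1 + λ1). Then the truncated relaxed single-arm problem is indexable: for all subsidies W ≤ W′, the passive sets satisfy P(W) ⊆ P(W′). -/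
/-- Active action-value `Q0` (sensing) in the truncated relaxed single-arm problem. -/
noncomputable def QW0 (γ lam0 c0 : ℝ) (A : ℕ) (V : ℕ → ℕ → ℝ) (m b : ℕ) : ℝ :=
  (m : ℝ) + c0 + γ * (lam0 * V (min (m + 1) A) 1 +
    (1 - lam0) * V (min (m + 1) A) (min (b + 1) A))

/-- Active action-value `Q1` (communication) in the truncated relaxed problem. -/
noncomputable def QW1 (γ lam1 c1 : ℝ) (A : ℕ) (V : ℕ → ℕ → ℝ) (m b : ℕ) : ℝ :=
  (m : ℝ) + c1 + γ * (lam1 * V (min (b + 1) A) (min (b + 1) A) +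
    (1 - lam1) * V (min (m + 1) A) (min (b + 1) A))

/-- Active action-value `Q2` (joint) in the truncated relaxed problem. -/
noncomputable def QW2 (γ lam2 c2 : ℝ) (A : ℕ) (V : ℕ → ℕ → ℝ) (m b : ℕ) : ℝ :=
  (m : ℝ) + c2 + γ * (lam2 * V (min (b + 1) A) 1 +
    (1 - lam2) * V (min (m + 1) A) (min (b + 1) A))

/-- Idle action-value `Q3` with subsidy `W` in the truncated relaxed problem. -/
noncomputable def QW3 (γ W : ℝ) (A : ℕ) (V : ℕ → ℕ → ℝ) (m b : ℕ) : ℝ :=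
  (m : ℝ) - W + γ * V (min (m + 1) A) (min (b + 1) A)

/-- The relaxed Bellman operator `T_W` on the truncated state space `S_A`. -/
noncomputable def TW (γ lam0 lam1 lam2 c0 c1 c2 W : ℝ) (A : ℕ)
    (V : ℕ → ℕ → ℝ) (m b : ℕ) : ℝ :=
  min (QW0 γ lam0 c0 A V m b)
    (min (QW1 γ lam1 c1 A V m b)
      (min (QW2 γ lam2 c2 A V m b) (QW3 γ W A V m b)))

private lemma min4_le_min4_add {a0 a1 a2 a3 b0 b1 b2 b3 c : ℝ}
    (h0 : a0 ≤ b0 + c) (h1 : a1 ≤ b1 + c) (h2 : a2 ≤ b2 + c) (h3 : a3 ≤ b3 + c) :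
    min a0 (min a1 (min a2 a3)) ≤ min b0 (min b1 (min b2 b3)) + c := by
  have h : min b0 (min b1 (min b2 b3)) + c
      = min (b0 + c) (min (b1 + c) (min (b2 + c) (b3 + c))) := by
    rw [min_add_add_right, min_add_add_right, min_add_add_right]
  rw [h]
  exact min_le_min h0 (min_le_min h1 (min_le_min h2 h3))

private lemma VW_diff_bounds
    (γ lam0 lam1 lam2 c0 c1 c2 : ℝ)
    (hγ0 : 0 < γ) (hγ1 : γ < 1)
    (hl0 : 0 < lam0) (hl0' : lam0 < 1)
    (hl1 : 0 < lam1) (hl1' : lam1 < 1)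
    (hl2 : 0 < lam2) (hl2' : lam2 < 1)
    (A : ℕ) (hA : 1 ≤ A)
    (VW : ℝ → ℕ → ℕ → ℝ)
    (hfix : ∀ W : ℝ, ∀ m b : ℕ, 1 ≤ b → b ≤ m → m ≤ A →
      VW W m b = TW γ lam0 lam1 lam2 c0 c1 c2 W A (VW W) m b)
    (W W' : ℝ) (hWW' : W ≤ W') :
    ∀ m b : ℕ, 1 ≤ b → b ≤ m → m ≤ A →
      0 ≤ VW W m b - VW W' m b ∧ (1 - γ) * (VW W m b - VW W' m b) ≤ W' - W := by
  classical
  set SA : Finset (ℕ × ℕ) :=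
    (Finset.Icc 1 A ×ˢ Finset.Icc 1 A).filter (fun p => p.2 ≤ p.1) with hSA
  have hmemSA : ∀ p : ℕ × ℕ, p ∈ SA ↔ (1 ≤ p.2 ∧ p.2 ≤ p.1 ∧ p.1 ≤ A) := by
    intro p
    simp only [hSA, Finset.mem_filter, Finset.mem_product, Finset.mem_Icc]
    omega
  have hne : SA.Nonempty := ⟨(1,1), (hmemSA (1,1)).2 (by omega)⟩
  have hsucc : ∀ m b : ℕ, 1 ≤ b → b ≤ m → m ≤ A →
      (min (m+1) A, min (b+1) A) ∈ SA ∧ (min (m+1) A, 1) ∈ SA ∧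
      (min (b+1) A, min (b+1) A) ∈ SA ∧ (min (b+1) A, 1) ∈ SA := by
    intro m b hb hbm hmA
    refine ⟨(hmemSA _).2 ?_, (hmemSA _).2 ?_, (hmemSA _).2 ?_, (hmemSA _).2 ?_⟩ <;> omega
  obtain ⟨p0, hp0, hmin⟩ := SA.exists_min_image
    (fun p => VW W p.1 p.2 - VW W' p.1 p.2) hne
  obtain ⟨p1, hp1, hmax⟩ := SA.exists_max_image
    (fun p => VW W p.1 p.2 - VW W' p.1 p.2) hne
  -- lower bound at the minimizer
  have hm0 : 0 ≤ VW W p0.1 p0.2 - VW W' p0.1 p0.2 := by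
    obtain ⟨m, b⟩ := p0
    obtain ⟨hb, hbm, hmA⟩ := (hmemSA (m, b)).1 hp0
    obtain ⟨hs1, hs2, hs3, hs4⟩ := hsucc m b hb hbm hmA
    have hg1 : VW W m b - VW W' m b ≤ VW W (min (m+1) A) (min (b+1) A) - VW W' (min (m+1) A) (min (b+1) A) :=
      hmin _ hs1
    have hg2 : VW W m b - VW W' m b ≤ VW W (min (m+1) A) 1 - VW W' (min (m+1) A) 1 := hmin _ hs2
    have hg3 : VW W m b - VW W' m b ≤ VW W (min (b+1) A) (min (b+1) A) - VW W' (min (b+1) A) (min (b+1) A) :=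
      hmin _ hs3
    have hg4 : VW W m b - VW W' m b ≤ VW W (min (b+1) A) 1 - VW W' (min (b+1) A) 1 := hmin _ hs4
    have e1 := hfix W m b hb hbm hmA
    have e2 := hfix W' m b hb hbm hmA
    simp only [TW] at e1 e2
    have key : min (QW0 γ lam0 c0 A (VW W') m b)
        (min (QW1 γ lam1 c1 A (VW W') m b)
          (min (QW2 γ lam2 c2 A (VW W') m b) (QW3 γ W' A (VW W') m b)))
        ≤ min (QW0 γ lam0 c0 A (VW W) m b)
        (min (QW1 γ lam1 c1 A (VW W) m b)
          (min (QW2 γ lam2 c2 A (VW W) m b) (QW3 γ W A (VW W) m b))) + (-(γ * (VW W m b - VW W' m b))) := by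
      refine min4_le_min4_add ?_ ?_ ?_ ?_
      · simp only [QW0]
        have t1 := mul_le_mul_of_nonneg_left hg2 (mul_nonneg hγ0.le hl0.le)
        have t2 := mul_le_mul_of_nonneg_left hg1
          (mul_nonneg hγ0.le (by linarith : (0:ℝ) ≤ 1 - lam0))
        linarith
      · simp only [QW1]
        have t1 := mul_le_mul_of_nonneg_left hg3 (mul_nonneg hγ0.le hl1.le)
        have t2 := mul_le_mul_of_nonneg_left hg1
          (mul_nonneg hγ0.le (by linarith : (0:ℝ) ≤ 1 - lam1))
        linarith
      · simp only [QW2]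
        have t1 := mul_le_mul_of_nonneg_left hg4 (mul_nonneg hγ0.le hl2.le)
        have t2 := mul_le_mul_of_nonneg_left hg1
          (mul_nonneg hγ0.le (by linarith : (0:ℝ) ≤ 1 - lam2))
        linarith
      · simp only [QW3]
        have t1 := mul_le_mul_of_nonneg_left hg1 hγ0.le
        linarith
    rw [← e1, ← e2] at key
    have hstep : γ * (VW W m b - VW W' m b) ≤ VW W m b - VW W' m b := by linarith
    show 0 ≤ VW W m b - VW W' m b
    nlinarith [hstep, hγ1, hγ0]
  -- upper bound at the maximizer
  have hM1 : (1 - γ) * (VW W p1.1 p1.2 - VW W' p1.1 p1.2) ≤ W' - W := by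
    obtain ⟨m, b⟩ := p1
    obtain ⟨hb, hbm, hmA⟩ := (hmemSA (m, b)).1 hp1
    obtain ⟨hs1, hs2, hs3, hs4⟩ := hsucc m b hb hbm hmA
    have hg1 : VW W (min (m+1) A) (min (b+1) A) - VW W' (min (m+1) A) (min (b+1) A) ≤ VW W m b - VW W' m b :=
      hmax _ hs1
    have hg2 : VW W (min (m+1) A) 1 - VW W' (min (m+1) A) 1 ≤ VW W m b - VW W' m b := hmax _ hs2
    have hg3 : VW W (min (b+1) A) (min (b+1) A) - VW W' (min (b+1) A) (min (b+1) A) ≤ VW W m b - VW W' m b :=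
      hmax _ hs3
    have hg4 : VW W (min (b+1) A) 1 - VW W' (min (b+1) A) 1 ≤ VW W m b - VW W' m b := hmax _ hs4
    have e1 := hfix W m b hb hbm hmA
    have e2 := hfix W' m b hb hbm hmA
    simp only [TW] at e1 e2
    have key : min (QW0 γ lam0 c0 A (VW W) m b)
        (min (QW1 γ lam1 c1 A (VW W) m b)
          (min (QW2 γ lam2 c2 A (VW W) m b) (QW3 γ W A (VW W) m b)))
        ≤ min (QW0 γ lam0 c0 A (VW W') m b)
        (min (QW1 γ lam1 c1 A (VW W') m b)
          (min (QW2 γ lam2 c2 A (VW W') m b) (QW3 γ W' A (VW W') m b)))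
          + ((W' - W) + γ * (VW W m b - VW W' m b)) := by
      refine min4_le_min4_add ?_ ?_ ?_ ?_
      · simp only [QW0]
        have t1 := mul_le_mul_of_nonneg_left hg2 (mul_nonneg hγ0.le hl0.le)
        have t2 := mul_le_mul_of_nonneg_left hg1
          (mul_nonneg hγ0.le (by linarith : (0:ℝ) ≤ 1 - lam0))
        linarith
      · simp only [QW1]
        have t1 := mul_le_mul_of_nonneg_left hg3 (mul_nonneg hγ0.le hl1.le)
        have t2 := mul_le_mul_of_nonneg_left hg1
          (mul_nonneg hγ0.le (by linarith : (0:ℝ) ≤ 1 - lam1))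
        linarith
      · simp only [QW2]
        have t1 := mul_le_mul_of_nonneg_left hg4 (mul_nonneg hγ0.le hl2.le)
        have t2 := mul_le_mul_of_nonneg_left hg1
          (mul_nonneg hγ0.le (by linarith : (0:ℝ) ≤ 1 - lam2))
        linarith
      · simp only [QW3]
        have t1 := mul_le_mul_of_nonneg_left hg1 hγ0.le
        linarith
    rw [← e1, ← e2] at key
    show (1 - γ) * (VW W m b - VW W' m b) ≤ W' - W
    linarith
  intro m b hb hbm hmA
  have hmem : (m, b) ∈ SA := (hmemSA (m, b)).2 ⟨hb, hbm, hmA⟩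
  refine ⟨hm0.trans (hmin _ hmem), ?_⟩
  have h1 : VW W m b - VW W' m b ≤ VW W p1.1 p1.2 - VW W' p1.1 p1.2 := hmax _ hmem
  nlinarith [mul_nonneg (by linarith : (0:ℝ) ≤ 1 - γ) (sub_nonneg.2 h1)]

set_option maxHeartbeats 1000000 in
private lemma relaxed_problem_indexable_aux
    (γ lam0 lam1 lam2 c0 c1 c2 : ℝ)
    (hγ0 : 0 < γ) (hγ1 : γ < 1)
    (hl0 : 0 < lam0) (hl0' : lam0 < 1)
    (hl1 : 0 < lam1) (hl1' : lam1 < 1)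
    (hl2 : 0 < lam2) (hl2' : lam2 < 1)
    (hc0 : 0 ≤ c0) (hc1 : 0 ≤ c1) (hc2 : 0 ≤ c2)
    (hord1 : lam2 ≤ lam0) (hord2 : lam0 ≤ lam1)
    (hγ : γ ≤ 1 / (1 + lam1))
    (A : ℕ) (hA : 1 ≤ A)
    (VW : ℝ → ℕ → ℕ → ℝ)
    (hfix : ∀ W : ℝ, ∀ m b : ℕ, 1 ≤ b → b ≤ m → m ≤ A →
      VW W m b = TW γ lam0 lam1 lam2 c0 c1 c2 W A (VW W) m b) :
    ∀ W W' : ℝ, W ≤ W' → ∀ m b : ℕ, 1 ≤ b → b ≤ m → m ≤ A →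
      (QW0 γ lam0 c0 A (VW W) m b - QW3 γ W A (VW W) m b ≥ 0 ∧
       QW1 γ lam1 c1 A (VW W) m b - QW3 γ W A (VW W) m b ≥ 0 ∧
       QW2 γ lam2 c2 A (VW W) m b - QW3 γ W A (VW W) m b ≥ 0) →
      (QW0 γ lam0 c0 A (VW W') m b - QW3 γ W' A (VW W') m b ≥ 0 ∧
       QW1 γ lam1 c1 A (VW W') m b - QW3 γ W' A (VW W') m b ≥ 0 ∧
       QW2 γ lam2 c2 A (VW W') m b - QW3 γ W' A (VW W') m b ≥ 0) := by
  rintro W W' hWW' m b hb hbm hmA ⟨h0, h1, h2⟩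
  have hglam : γ * lam1 ≤ 1 - γ := by
    have h1lam : (0:ℝ) < 1 + lam1 := by linarith
    rw [le_div_iff₀ h1lam] at hγ
    nlinarith
  have hB := VW_diff_bounds γ lam0 lam1 lam2 c0 c1 c2 hγ0 hγ1 hl0 hl0' hl1 hl1'
    hl2 hl2' A hA VW hfix W W' hWW'
  obtain ⟨ha1, ha2⟩ := hB (min (m+1) A) (min (b+1) A) (by omega) (by omega) (by omega)
  obtain ⟨hb1, hb2⟩ := hB (min (m+1) A) 1 (le_refl 1) (by omega) (by omega)
  obtain ⟨hc1', hc2'⟩ := hB (min (b+1) A) (min (b+1) A) (by omega) (by omega) (by omega)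
  obtain ⟨hd1, hd2⟩ := hB (min (b+1) A) 1 (le_refl 1) (by omega) (by omega)
  simp only [QW0, QW1, QW2, QW3] at h0 h1 h2 ⊢
  refine ⟨?_, ?_, ?_⟩
  · -- u = 0
    have k1 : γ * lam0 * (VW W (min (m+1) A) 1 - VW W' (min (m+1) A) 1) ≤ W' - W := by
      have t1 : 0 ≤ γ * (lam1 - lam0) * (VW W (min (m+1) A) 1 - VW W' (min (m+1) A) 1) :=
        mul_nonneg (mul_nonneg hγ0.le (by linarith)) hb1
      have t2 : 0 ≤ ((1 - γ) - γ * lam1) * (VW W (min (m+1) A) 1 - VW W' (min (m+1) A) 1) :=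
        mul_nonneg (by linarith) hb1
      nlinarith [hb2]
    have k2 : 0 ≤ γ * lam0 *
        (VW W (min (m+1) A) (min (b+1) A) - VW W' (min (m+1) A) (min (b+1) A)) :=
      mul_nonneg (mul_nonneg hγ0.le hl0.le) ha1
    linarith [h0, k1, k2]
  · -- u = 1
    have k1 : γ * lam1 * (VW W (min (b+1) A) (min (b+1) A) - VW W' (min (b+1) A) (min (b+1) A))
        ≤ W' - W := by
      have t2 : 0 ≤ ((1 - γ) - γ * lam1) *
          (VW W (min (b+1) A) (min (b+1) A) - VW W' (min (b+1) A) (min (b+1) A)) :=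
        mul_nonneg (by linarith) hc1'
      nlinarith [hc2']
    have k2 : 0 ≤ γ * lam1 *
        (VW W (min (m+1) A) (min (b+1) A) - VW W' (min (m+1) A) (min (b+1) A)) :=
      mul_nonneg (mul_nonneg hγ0.le hl1.le) ha1
    linarith [h1, k1, k2]
  · -- u = 2
    have k1 : γ * lam2 * (VW W (min (b+1) A) 1 - VW W' (min (b+1) A) 1) ≤ W' - W := by
      have t1 : 0 ≤ γ * (lam1 - lam2) * (VW W (min (b+1) A) 1 - VW W' (min (b+1) A) 1) :=
        mul_nonneg (mul_nonneg hγ0.le (by linarith)) hd1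
      have t2 : 0 ≤ ((1 - γ) - γ * lam1) * (VW W (min (b+1) A) 1 - VW W' (min (b+1) A) 1) :=
        mul_nonneg (by linarith) hd1
      nlinarith [hd2]
    have k2 : 0 ≤ γ * lam2 *
        (VW W (min (m+1) A) (min (b+1) A) - VW W' (min (m+1) A) (min (b+1) A)) :=
      mul_nonneg (mul_nonneg hγ0.le hl2.le) ha1
    linarith [h2, k1, k2]

/-- If `λ2 ≤ λ0 ≤ λ1` and `γ ≤ 1/(1+λ1)`, the truncated relaxed
single-arm problem is indexable: for subsidies `W ≤ W'`, the passive sets satisfy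
`P(W) ⊆ P(W')`, where `P(W)` is the set of states where the idle action is optimal,
i.e. where all three active-idle differences `Δu3(·,W)` are nonnegative. -/
theorem relaxed_problem_indexable
    (γ lam0 lam1 lam2 c0 c1 c2 : ℝ)
    (hγ0 : 0 < γ) (hγ1 : γ < 1)
    (hl0 : 0 < lam0) (hl0' : lam0 < 1)
    (hl1 : 0 < lam1) (hl1' : lam1 < 1)
    (hl2 : 0 < lam2) (hl2' : lam2 < 1)
    (hc0 : 0 ≤ c0) (hc1 : 0 ≤ c1) (hc2 : 0 ≤ c2)
    (hord1 : lam2 ≤ lam0) (hord2 : lam0 ≤ lam1)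
    (hγ : γ ≤ 1 / (1 + lam1))
    (A : ℕ) (hA : 1 ≤ A)
    (VW : ℝ → ℕ → ℕ → ℝ)
    (hfix : ∀ W : ℝ, ∀ m b : ℕ, 1 ≤ b → b ≤ m → m ≤ A →
      VW W m b = TW γ lam0 lam1 lam2 c0 c1 c2 W A (VW W) m b) :
    ∀ W W' : ℝ, W ≤ W' → ∀ m b : ℕ, 1 ≤ b → b ≤ m → m ≤ A →
      (QW0 γ lam0 c0 A (VW W) m b - QW3 γ W A (VW W) m b ≥ 0 ∧
       QW1 γ lam1 c1 A (VW W) m b - QW3 γ W A (VW W) m b ≥ 0 ∧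
       QW2 γ lam2 c2 A (VW W) m b - QW3 γ W A (VW W) m b ≥ 0) →
      (QW0 γ lam0 c0 A (VW W') m b - QW3 γ W' A (VW W') m b ≥ 0 ∧
       QW1 γ lam1 c1 A (VW W') m b - QW3 γ W' A (VW W') m b ≥ 0 ∧
       QW2 γ lam2 c2 A (VW W') m b - QW3 γ W' A (VW W') m b ≥ 0) := by
  exact relaxed_problem_indexable_aux γ lam0 lam1 lam2 c0 c1 c2 hγ0 hγ1 hl0 hl0'
    hl1 hl1' hl2 hl2' hc0 hc1 hc2 hord1 hord2 hγ A hA VW hfix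
end

section
/- For every u ∈ {0,1,2}, every state s ∈ S_A, and all subsidies W ≤ W′, the active-idle difference satisfies Δu3(s,W′) − Δu3(s,W) ≥ (W′ − W)·(1 − γ·λu/(1−γ)). -/
private lemma min_sub_min_le (a b c d : ℝ) :
    min a b - min c d ≤ max (a - c) (b - d) := by
  rcases le_total c d with h | h
  · have h1 : min c d = c := min_eq_left h
    have h2 : min a b ≤ a := min_le_left a b
    have h3 : a - c ≤ max (a - c) (b - d) := le_max_left _ _
    linarith
  · have h1 : min c d = d := min_eq_right h
    have h2 : min a b ≤ b := min_le_right a b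
    have h3 : b - d ≤ max (a - c) (b - d) := le_max_right _ _
    linarith

private lemma min4_sub_min4_le (a b c d a' b' c' d' : ℝ) :
    min a (min b (min c d)) - min a' (min b' (min c' d')) ≤
      max (a - a') (max (b - b') (max (c - c') (d - d'))) := by
  have h1 := min_sub_min_le c d c' d'
  have h2 := min_sub_min_le b (min c d) b' (min c' d')
  have h3 := min_sub_min_le a (min b (min c d)) a' (min b' (min c' d'))
  have h4 : max (b - b') (min c d - min c' d') ≤
      max (b - b') (max (c - c') (d - d')) := max_le_max le_rfl h1
  have h5 : max (a - a') (min b (min c d) - min b' (min c' d')) ≤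
      max (a - a') (max (b - b') (max (c - c') (d - d'))) :=
    max_le_max le_rfl (le_trans h2 h4)
  exact le_trans h3 h5

private lemma active_branch_le (γ lam E t e1 e2 : ℝ)
    (hγ : 0 ≤ γ) (hl : 0 ≤ lam) (hl' : lam ≤ 1) (ht : 0 ≤ t)
    (h1 : e1 ≤ E) (h2 : e2 ≤ E) :
    γ * (lam * e1 + (1 - lam) * e2) ≤ t + γ * E := by
  have hc : lam * e1 + (1 - lam) * e2 ≤ E := by
    have := mul_le_mul_of_nonneg_left h1 hl
    have := mul_le_mul_of_nonneg_left h2 (by linarith : (0:ℝ) ≤ 1 - lam)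
    linarith
  have := mul_le_mul_of_nonneg_left hc hγ
  linarith

private lemma VW_sub_le
    (γ lam0 lam1 lam2 c0 c1 c2 : ℝ)
    (hγ0 : 0 < γ) (hγ1 : γ < 1)
    (hl0 : 0 ≤ lam0) (hl0' : lam0 ≤ 1)
    (hl1 : 0 ≤ lam1) (hl1' : lam1 ≤ 1)
    (hl2 : 0 ≤ lam2) (hl2' : lam2 ≤ 1)
    (A : ℕ) (hA : 1 ≤ A)
    (VW : ℝ → ℕ → ℕ → ℝ)
    (hfix : ∀ W : ℝ, ∀ m b : ℕ, 1 ≤ b → b ≤ m → m ≤ A →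
      VW W m b = TW γ lam0 lam1 lam2 c0 c1 c2 W A (VW W) m b)
    (Wa Wb t : ℝ) (ht0 : 0 ≤ t) (ht : Wb - Wa ≤ t) :
    ∀ m b : ℕ, 1 ≤ b → b ≤ m → m ≤ A →
      VW Wa m b - VW Wb m b ≤ t / (1 - γ) := by
  have h1γ : (0:ℝ) < 1 - γ := by linarith
  set S : Finset (ℕ × ℕ) :=
    (Finset.range (A+1) ×ˢ Finset.range (A+1)).filter
      (fun p => 1 ≤ p.2 ∧ p.2 ≤ p.1 ∧ p.1 ≤ A) with hS
  have hmemS : ∀ p : ℕ × ℕ, p ∈ S ↔ 1 ≤ p.2 ∧ p.2 ≤ p.1 ∧ p.1 ≤ A := by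
    intro p
    simp only [hS, Finset.mem_filter, Finset.mem_product, Finset.mem_range]
    omega
  have hne : S.Nonempty := ⟨(1,1), (hmemS (1,1)).mpr ⟨le_rfl, le_rfl, hA⟩⟩
  set f : ℕ × ℕ → ℝ := fun p => VW Wa p.1 p.2 - VW Wb p.1 p.2 with hf
  set E := S.sup' hne f with hEdef
  have hfE : ∀ m b : ℕ, 1 ≤ b → b ≤ m → m ≤ A →
      VW Wa m b - VW Wb m b ≤ E := by
    intro m b h1 h2 h3
    exact Finset.le_sup' f ((hmemS (m,b)).mpr ⟨h1, h2, h3⟩)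
  have hstep : ∀ m b : ℕ, 1 ≤ b → b ≤ m → m ≤ A →
      VW Wa m b - VW Wb m b ≤ t + γ * E := by
    intro m b hb hbm hmA
    rw [hfix Wa m b hb hbm hmA, hfix Wb m b hb hbm hmA]
    unfold TW
    refine le_trans (min4_sub_min4_le _ _ _ _ _ _ _ _) ?_
    have e0a : VW Wa (min (m+1) A) 1 - VW Wb (min (m+1) A) 1 ≤ E :=
      hfE _ _ (by omega) (by omega) (by omega)
    have ep : VW Wa (min (m+1) A) (min (b+1) A) -
        VW Wb (min (m+1) A) (min (b+1) A) ≤ E :=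
      hfE _ _ (by omega) (by omega) (by omega)
    have e1a : VW Wa (min (b+1) A) (min (b+1) A) -
        VW Wb (min (b+1) A) (min (b+1) A) ≤ E :=
      hfE _ _ (by omega) (by omega) (by omega)
    have e2a : VW Wa (min (b+1) A) 1 - VW Wb (min (b+1) A) 1 ≤ E :=
      hfE _ _ (by omega) (by omega) (by omega)
    refine max_le ?_ (max_le ?_ (max_le ?_ ?_))
    · have hk : QW0 γ lam0 c0 A (VW Wa) m b - QW0 γ lam0 c0 A (VW Wb) m b =
        γ * (lam0 * (VW Wa (min (m+1) A) 1 - VW Wb (min (m+1) A) 1) +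
          (1 - lam0) * (VW Wa (min (m+1) A) (min (b+1) A) -
            VW Wb (min (m+1) A) (min (b+1) A))) := by
        simp only [QW0]; ring
      rw [hk]
      exact active_branch_le γ lam0 E t _ _ hγ0.le hl0 hl0' ht0 e0a ep
    · have hk : QW1 γ lam1 c1 A (VW Wa) m b - QW1 γ lam1 c1 A (VW Wb) m b =
        γ * (lam1 * (VW Wa (min (b+1) A) (min (b+1) A) -
            VW Wb (min (b+1) A) (min (b+1) A)) +
          (1 - lam1) * (VW Wa (min (m+1) A) (min (b+1) A) -
            VW Wb (min (m+1) A) (min (b+1) A))) := by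
        simp only [QW1]; ring
      rw [hk]
      exact active_branch_le γ lam1 E t _ _ hγ0.le hl1 hl1' ht0 e1a ep
    · have hk : QW2 γ lam2 c2 A (VW Wa) m b - QW2 γ lam2 c2 A (VW Wb) m b =
        γ * (lam2 * (VW Wa (min (b+1) A) 1 - VW Wb (min (b+1) A) 1) +
          (1 - lam2) * (VW Wa (min (m+1) A) (min (b+1) A) -
            VW Wb (min (m+1) A) (min (b+1) A))) := by
        simp only [QW2]; ring
      rw [hk]
      exact active_branch_le γ lam2 E t _ _ hγ0.le hl2 hl2' ht0 e2a ep
    · have hk : QW3 γ Wa A (VW Wa) m b - QW3 γ Wb A (VW Wb) m b =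
        (Wb - Wa) + γ * (VW Wa (min (m+1) A) (min (b+1) A) -
          VW Wb (min (m+1) A) (min (b+1) A)) := by
        simp only [QW3]; ring
      rw [hk]
      have := mul_le_mul_of_nonneg_left ep hγ0.le
      linarith
  obtain ⟨p0, hp0S, hp0⟩ := Finset.exists_mem_eq_sup' hne f
  obtain ⟨h1, h2, h3⟩ := (hmemS p0).mp hp0S
  have hE1 : E ≤ t + γ * E :=
    le_trans (le_of_eq hp0) (hstep p0.1 p0.2 h1 h2 h3)
  have hEfin : E ≤ t / (1 - γ) := by
    rw [le_div_iff₀ h1γ]; nlinarith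
  intro m b hb hbm hmA
  exact le_trans (hfE m b hb hbm hmA) hEfin

/-- For every active action `u ∈ {0,1,2}`, every state `s ∈ S_A`, and
all subsidies `W ≤ W'`, the active-idle difference satisfies
`Δu3(s,W') − Δu3(s,W) ≥ (W' − W)·(1 − γλu/(1−γ))`. -/
theorem active_idle_difference_monotone
    (γ lam0 lam1 lam2 c0 c1 c2 : ℝ)
    (hγ0 : 0 < γ) (hγ1 : γ < 1)
    (hl0 : 0 < lam0) (hl0' : lam0 < 1)
    (hl1 : 0 < lam1) (hl1' : lam1 < 1)
    (hl2 : 0 < lam2) (hl2' : lam2 < 1)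
    (hc0 : 0 ≤ c0) (hc1 : 0 ≤ c1) (hc2 : 0 ≤ c2)
    (A : ℕ) (hA : 1 ≤ A)
    (VW : ℝ → ℕ → ℕ → ℝ)
    (hfix : ∀ W : ℝ, ∀ m b : ℕ, 1 ≤ b → b ≤ m → m ≤ A →
      VW W m b = TW γ lam0 lam1 lam2 c0 c1 c2 W A (VW W) m b) :
    ∀ W W' : ℝ, W ≤ W' → ∀ m b : ℕ, 1 ≤ b → b ≤ m → m ≤ A →
      ((QW0 γ lam0 c0 A (VW W') m b - QW3 γ W' A (VW W') m b) -
          (QW0 γ lam0 c0 A (VW W) m b - QW3 γ W A (VW W) m b) ≥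
        (W' - W) * (1 - γ * lam0 / (1 - γ))) ∧
      ((QW1 γ lam1 c1 A (VW W') m b - QW3 γ W' A (VW W') m b) -
          (QW1 γ lam1 c1 A (VW W) m b - QW3 γ W A (VW W) m b) ≥
        (W' - W) * (1 - γ * lam1 / (1 - γ))) ∧
      ((QW2 γ lam2 c2 A (VW W') m b - QW3 γ W' A (VW W') m b) -
          (QW2 γ lam2 c2 A (VW W) m b - QW3 γ W A (VW W) m b) ≥
        (W' - W) * (1 - γ * lam2 / (1 - γ))) := by
  intro W W' hWW' m b hb hbm hmA
  have h1γ : (0:ℝ) < 1 - γ := by linarith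
  have hub := VW_sub_le γ lam0 lam1 lam2 c0 c1 c2 hγ0 hγ1
    hl0.le hl0'.le hl1.le hl1'.le hl2.le hl2'.le A hA VW hfix
    W W' (W' - W) (by linarith) le_rfl
  have hlb := VW_sub_le γ lam0 lam1 lam2 c0 c1 c2 hγ0 hγ1
    hl0.le hl0'.le hl1.le hl1'.le hl2.le hl2'.le A hA VW hfix
    W' W 0 le_rfl (by linarith)
  simp only [zero_div] at hlb
  -- successor-state bounds
  have hub0 : VW W (min (m+1) A) 1 - VW W' (min (m+1) A) 1 ≤ (W' - W) / (1 - γ) :=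
    hub _ _ (by omega) (by omega) (by omega)
  have hub1 : VW W (min (b+1) A) (min (b+1) A) -
      VW W' (min (b+1) A) (min (b+1) A) ≤ (W' - W) / (1 - γ) :=
    hub _ _ (by omega) (by omega) (by omega)
  have hub2 : VW W (min (b+1) A) 1 - VW W' (min (b+1) A) 1 ≤ (W' - W) / (1 - γ) :=
    hub _ _ (by omega) (by omega) (by omega)
  have hlbp : VW W' (min (m+1) A) (min (b+1) A) -
      VW W (min (m+1) A) (min (b+1) A) ≤ 0 :=
    hlb _ _ (by omega) (by omega) (by omega)
  refine ⟨?_, ?_, ?_⟩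
  · have hk : (QW0 γ lam0 c0 A (VW W') m b - QW3 γ W' A (VW W') m b) -
        (QW0 γ lam0 c0 A (VW W) m b - QW3 γ W A (VW W) m b) =
        (W' - W) - γ * lam0 * (VW W (min (m+1) A) 1 - VW W' (min (m+1) A) 1)
          + γ * lam0 * (VW W (min (m+1) A) (min (b+1) A) -
              VW W' (min (m+1) A) (min (b+1) A)) := by
      simp only [QW0, QW3]; ring
    have hR : (W' - W) * (1 - γ * lam0 / (1 - γ)) =
        (W' - W) - γ * lam0 * ((W' - W) / (1 - γ)) := by ring
    have hgl : (0:ℝ) ≤ γ * lam0 := mul_nonneg hγ0.le hl0.le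
    have h1 := mul_le_mul_of_nonneg_left hub0 hgl
    rw [ge_iff_le, hk, hR]
    nlinarith [mul_le_mul_of_nonneg_left hlbp hgl]
  · have hk : (QW1 γ lam1 c1 A (VW W') m b - QW3 γ W' A (VW W') m b) -
        (QW1 γ lam1 c1 A (VW W) m b - QW3 γ W A (VW W) m b) =
        (W' - W) - γ * lam1 * (VW W (min (b+1) A) (min (b+1) A) -
            VW W' (min (b+1) A) (min (b+1) A))
          + γ * lam1 * (VW W (min (m+1) A) (min (b+1) A) -
              VW W' (min (m+1) A) (min (b+1) A)) := by
      simp only [QW1, QW3]; ring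
    have hR : (W' - W) * (1 - γ * lam1 / (1 - γ)) =
        (W' - W) - γ * lam1 * ((W' - W) / (1 - γ)) := by ring
    have hgl : (0:ℝ) ≤ γ * lam1 := mul_nonneg hγ0.le hl1.le
    have h1 := mul_le_mul_of_nonneg_left hub1 hgl
    rw [ge_iff_le, hk, hR]
    nlinarith [mul_le_mul_of_nonneg_left hlbp hgl]
  · have hk : (QW2 γ lam2 c2 A (VW W') m b - QW3 γ W' A (VW W') m b) -
        (QW2 γ lam2 c2 A (VW W) m b - QW3 γ W A (VW W) m b) =
        (W' - W) - γ * lam2 * (VW W (min (b+1) A) 1 - VW W' (min (b+1) A) 1)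
          + γ * lam2 * (VW W (min (m+1) A) (min (b+1) A) -
              VW W' (min (m+1) A) (min (b+1) A)) := by
      simp only [QW2, QW3]; ring
    have hR : (W' - W) * (1 - γ * lam2 / (1 - γ)) =
        (W' - W) - γ * lam2 * ((W' - W) / (1 - γ)) := by ring
    have hgl : (0:ℝ) ≤ γ * lam2 := mul_nonneg hγ0.le hl2.le
    have h1 := mul_le_mul_of_nonneg_left hub2 hgl
    rw [ge_iff_le, hk, hR]
    nlinarith [mul_le_mul_of_nonneg_left hlbp hgl]
end

section
/- Fix a state s ∈ S_A and define λ_max = max{λ0, λ1, λ2}. Suppose W* ∈ ℝ satisfies the Whittle fixed-point relation F_s(W*) = W*. Then for every Ŵ ∈ ℝ, the one-step update W̃ := F_s(Ŵ) satisfies |W̃ − W*| ≤ (2·γ·λ_max/(1−γ)) · |Ŵ − W*|. -/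
/-- The Whittle fixed-point map `F_s(W) = max_{u∈{0,1,2}} [γλu(V(s⁺,W) − V(s′u,W)) − cu]`
at the state `s = (m,b)` of the truncated relaxed problem. -/
noncomputable def Fwhittle (γ lam0 lam1 lam2 c0 c1 c2 : ℝ) (A : ℕ)
    (VW : ℝ → ℕ → ℕ → ℝ) (m b : ℕ) (W : ℝ) : ℝ :=
  max (γ * lam0 * (VW W (min (m + 1) A) (min (b + 1) A) -
        VW W (min (m + 1) A) 1) - c0)
    (max (γ * lam1 * (VW W (min (m + 1) A) (min (b + 1) A) -
          VW W (min (b + 1) A) (min (b + 1) A)) - c1)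
      (γ * lam2 * (VW W (min (m + 1) A) (min (b + 1) A) -
          VW W (min (b + 1) A) 1) - c2))

lemma value_sup_bound (γ lam0 lam1 lam2 c0 c1 c2 : ℝ)
    (hγ0 : 0 < γ) (hγ1 : γ < 1)
    (hl0 : 0 ≤ lam0) (hl0' : lam0 ≤ 1)
    (hl1 : 0 ≤ lam1) (hl1' : lam1 ≤ 1)
    (hl2 : 0 ≤ lam2) (hl2' : lam2 ≤ 1)
    (A : ℕ) (hA : 1 ≤ A)
    (VW : ℝ → ℕ → ℕ → ℝ)
    (hfix : ∀ W : ℝ, ∀ m b : ℕ, 1 ≤ b → b ≤ m → m ≤ A →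
      VW W m b = TW γ lam0 lam1 lam2 c0 c1 c2 W A (VW W) m b)
    (W1 W2 : ℝ) :
    ∀ m b : ℕ, 1 ≤ b → b ≤ m → m ≤ A →
      |VW W1 m b - VW W2 m b| ≤ |W1 - W2| / (1 - γ) := by
  classical
  set S : Finset (ℕ × ℕ) :=
    (Finset.Icc 1 A ×ˢ Finset.Icc 1 A).filter (fun p => p.2 ≤ p.1) with hS
  have hmem : ∀ m b : ℕ, 1 ≤ b → b ≤ m → m ≤ A → (m, b) ∈ S := by
    intro m b h1 h2 h3
    simp only [hS, Finset.mem_filter, Finset.mem_product, Finset.mem_Icc]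
    omega
  have hne : S.Nonempty := ⟨(1, 1), hmem 1 1 le_rfl le_rfl hA⟩
  set f : ℕ × ℕ → ℝ := fun p => |VW W1 p.1 p.2 - VW W2 p.1 p.2| with hf
  set D := S.sup' hne f with hDdef
  have hDle : ∀ m b : ℕ, 1 ≤ b → b ≤ m → m ≤ A → |VW W1 m b - VW W2 m b| ≤ D :=
    fun m b h1 h2 h3 => Finset.le_sup' f (hmem m b h1 h2 h3)
  have hD0 : 0 ≤ D := le_trans (abs_nonneg _) (hDle 1 1 le_rfl le_rfl hA)
  obtain ⟨p0, hp0S, hp0⟩ := Finset.exists_mem_eq_sup' hne f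
  obtain ⟨m0, b0⟩ := p0
  have hp0S' : 1 ≤ b0 ∧ b0 ≤ m0 ∧ m0 ≤ A := by
    simp only [hS, Finset.mem_filter, Finset.mem_product, Finset.mem_Icc] at hp0S
    omega
  obtain ⟨hb0, hbm0, hm0A⟩ := hp0S'
  -- successor-state bounds
  have hdP : |VW W1 (min (m0+1) A) (min (b0+1) A) - VW W2 (min (m0+1) A) (min (b0+1) A)| ≤ D :=
    hDle _ _ (by omega) (by omega) (by omega)
  have hd0 : |VW W1 (min (m0+1) A) 1 - VW W2 (min (m0+1) A) 1| ≤ D :=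
    hDle _ _ (by omega) (by omega) (by omega)
  have hd1 : |VW W1 (min (b0+1) A) (min (b0+1) A) - VW W2 (min (b0+1) A) (min (b0+1) A)| ≤ D :=
    hDle _ _ (by omega) (by omega) (by omega)
  have hd2 : |VW W1 (min (b0+1) A) 1 - VW W2 (min (b0+1) A) 1| ≤ D :=
    hDle _ _ (by omega) (by omega) (by omega)
  have habsQ : ∀ (l c X1 X2 Y1 Y2 : ℝ), 0 ≤ l → l ≤ 1 →
      |X1 - X2| ≤ D → |Y1 - Y2| ≤ D →
      |((m0 : ℝ) + c + γ * (l * X1 + (1 - l) * Y1)) -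
        ((m0 : ℝ) + c + γ * (l * X2 + (1 - l) * Y2))| ≤ |W1 - W2| + γ * D := by
    intro l c X1 X2 Y1 Y2 hl hl' hX hY
    have heq : ((m0 : ℝ) + c + γ * (l * X1 + (1 - l) * Y1)) -
        ((m0 : ℝ) + c + γ * (l * X2 + (1 - l) * Y2)) =
        γ * (l * (X1 - X2) + (1 - l) * (Y1 - Y2)) := by ring
    rw [heq, abs_mul, abs_of_pos hγ0]
    have h1 : |l * (X1 - X2) + (1 - l) * (Y1 - Y2)| ≤ l * D + (1 - l) * D := by
      refine le_trans (abs_add_le _ _) (add_le_add ?_ ?_)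
      · rw [abs_mul, abs_of_nonneg hl]
        exact mul_le_mul_of_nonneg_left hX hl
      · rw [abs_mul, abs_of_nonneg (by linarith : (0:ℝ) ≤ 1 - l)]
        exact mul_le_mul_of_nonneg_left hY (by linarith)
    have : l * D + (1 - l) * D = D := by ring
    nlinarith [abs_nonneg (W1 - W2)]
  have hmain : |VW W1 m0 b0 - VW W2 m0 b0| ≤ |W1 - W2| + γ * D := by
    rw [hfix W1 m0 b0 hb0 hbm0 hm0A, hfix W2 m0 b0 hb0 hbm0 hm0A]
    unfold TW QW0 QW1 QW2 QW3
    refine le_trans (abs_min_sub_min_le_max _ _ _ _) (max_le ?_ ?_)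
    · exact habsQ lam0 c0 _ _ _ _ hl0 hl0' hd0 hdP
    refine le_trans (abs_min_sub_min_le_max _ _ _ _) (max_le ?_ ?_)
    · exact habsQ lam1 c1 _ _ _ _ hl1 hl1' hd1 hdP
    refine le_trans (abs_min_sub_min_le_max _ _ _ _) (max_le ?_ ?_)
    · exact habsQ lam2 c2 _ _ _ _ hl2 hl2' hd2 hdP
    · have heq : ((m0 : ℝ) - W1 + γ * VW W1 (min (m0+1) A) (min (b0+1) A)) -
          ((m0 : ℝ) - W2 + γ * VW W2 (min (m0+1) A) (min (b0+1) A)) =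
          (W2 - W1) + γ * (VW W1 (min (m0+1) A) (min (b0+1) A) -
            VW W2 (min (m0+1) A) (min (b0+1) A)) := by ring
      rw [heq]
      refine le_trans (abs_add_le _ _) ?_
      rw [abs_sub_comm]
      gcongr
      rw [abs_mul, abs_of_pos hγ0]
      exact mul_le_mul_of_nonneg_left hdP (le_of_lt hγ0)
  have key : D ≤ |W1 - W2| + γ * D := le_of_eq_of_le hp0 hmain
  have hDbound : D ≤ |W1 - W2| / (1 - γ) := by
    rw [le_div_iff₀ (by linarith : (0:ℝ) < 1 - γ)]
    nlinarith
  intro m b h1 h2 h3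
  exact le_trans (hDle m b h1 h2 h3) hDbound
/-- If `W*` satisfies the Whittle fixed-point relation `F_s(W*) = W*`,
then a one-step update `W̃ = F_s(Ŵ)` satisfies
`|W̃ − W*| ≤ (2γλ_max/(1−γ))·|Ŵ − W*|`, where `λ_max = max{λ0,λ1,λ2}`. -/
theorem whittle_one_step_update_error
    (γ lam0 lam1 lam2 c0 c1 c2 : ℝ)
    (hγ0 : 0 < γ) (hγ1 : γ < 1)
    (hl0 : 0 < lam0) (hl0' : lam0 < 1)
    (hl1 : 0 < lam1) (hl1' : lam1 < 1)
    (hl2 : 0 < lam2) (hl2' : lam2 < 1)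
    (hc0 : 0 ≤ c0) (hc1 : 0 ≤ c1) (hc2 : 0 ≤ c2)
    (A : ℕ) (hA : 1 ≤ A)
    (VW : ℝ → ℕ → ℕ → ℝ)
    (hfix : ∀ W : ℝ, ∀ m b : ℕ, 1 ≤ b → b ≤ m → m ≤ A →
      VW W m b = TW γ lam0 lam1 lam2 c0 c1 c2 W A (VW W) m b)
    (m b : ℕ) (hb : 1 ≤ b) (hbm : b ≤ m) (hmA : m ≤ A)
    (Wstar : ℝ)
    (hWstar : Fwhittle γ lam0 lam1 lam2 c0 c1 c2 A VW m b Wstar = Wstar) :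
    ∀ What : ℝ,
      |Fwhittle γ lam0 lam1 lam2 c0 c1 c2 A VW m b What - Wstar| ≤
        (2 * γ * max lam0 (max lam1 lam2) / (1 - γ)) * |What - Wstar| := by
  intro What
  have hE := value_sup_bound γ lam0 lam1 lam2 c0 c1 c2 hγ0 hγ1
    hl0.le hl0'.le hl1.le hl1'.le hl2.le hl2'.le A hA VW hfix What Wstar
  set E := |What - Wstar| / (1 - γ) with hEdef
  have hγpos : (0:ℝ) < 1 - γ := by linarith
  have hdP : |VW What (min (m+1) A) (min (b+1) A) -
      VW Wstar (min (m+1) A) (min (b+1) A)| ≤ E :=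
    hE _ _ (by omega) (by omega) (by omega)
  have hd0 : |VW What (min (m+1) A) 1 - VW Wstar (min (m+1) A) 1| ≤ E :=
    hE _ _ (by omega) (by omega) (by omega)
  have hd1 : |VW What (min (b+1) A) (min (b+1) A) -
      VW Wstar (min (b+1) A) (min (b+1) A)| ≤ E :=
    hE _ _ (by omega) (by omega) (by omega)
  have hd2 : |VW What (min (b+1) A) 1 - VW Wstar (min (b+1) A) 1| ≤ E :=
    hE _ _ (by omega) (by omega) (by omega)
  set L := max lam0 (max lam1 lam2) with hL
  have hl0L : lam0 ≤ L := le_max_left _ _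
  have hl1L : lam1 ≤ L := le_trans (le_max_left _ _) (le_max_right _ _)
  have hl2L : lam2 ≤ L := le_trans (le_max_right _ _) (le_max_right _ _)
  have hE0 : 0 ≤ E := div_nonneg (abs_nonneg _) hγpos.le
  have branch : ∀ (l c a1 a2 b1 b2 : ℝ), 0 < l → l ≤ L →
      |a1 - a2| ≤ E → |b1 - b2| ≤ E →
      |(γ * l * (a1 - b1) - c) - (γ * l * (a2 - b2) - c)| ≤
        2 * γ * L / (1 - γ) * |What - Wstar| := by
    intro l c a1 a2 b1 b2 hl hlL ha hb'
    have heq : (γ * l * (a1 - b1) - c) - (γ * l * (a2 - b2) - c) =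
        γ * l * ((a1 - a2) - (b1 - b2)) := by ring
    rw [heq, abs_mul, abs_of_pos (mul_pos hγ0 hl)]
    have h1 : |(a1 - a2) - (b1 - b2)| ≤ 2 * E :=
      le_trans (abs_sub _ _) (by linarith)
    have hRHS : 2 * γ * L / (1 - γ) * |What - Wstar| = 2 * γ * L * E := by
      rw [hEdef]; field_simp
    rw [hRHS]
    have h2 : γ * l * |(a1 - a2) - (b1 - b2)| ≤ γ * l * (2 * E) :=
      mul_le_mul_of_nonneg_left h1 (mul_pos hγ0 hl).le
    have h3 : γ * l * (2 * E) ≤ 2 * γ * L * E := by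
      nlinarith [mul_nonneg (mul_nonneg hγ0.le hE0) (sub_nonneg.mpr hlL)]
    linarith
  have hgoal : |Fwhittle γ lam0 lam1 lam2 c0 c1 c2 A VW m b What -
      Fwhittle γ lam0 lam1 lam2 c0 c1 c2 A VW m b Wstar| ≤
      2 * γ * L / (1 - γ) * |What - Wstar| := by
    unfold Fwhittle
    refine le_trans (abs_max_sub_max_le_max _ _ _ _) (max_le ?_ ?_)
    · exact branch lam0 c0 _ _ _ _ hl0 hl0L hdP hd0
    refine le_trans (abs_max_sub_max_le_max _ _ _ _) (max_le ?_ ?_)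
    · exact branch lam1 c1 _ _ _ _ hl1 hl1L hdP hd1
    · exact branch lam2 c2 _ _ _ _ hl2 hl2L hdP hd2
  rw [hWstar] at hgoal
  exact hgoal
end

section
/- Let b < A be natural numbers, let f be a real-valued function on the integers {b, b+1, …, A}, and let H ≥ 0 satisfy |f(a+2) − 2·f(a+1) + f(a)| ≤ H for all a with b ≤ a ≤ A−2. Define the linear interpolant L(a) = f(b) + ((a−b)/(A−b))·(f(A) − f(b)). Then for every a with b ≤ a ≤ A, the interpolation error satisfies |L(a) − f(a)| ≤ (H/2)·(a−b)·(A−a). -/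
open Finset

private lemma tele (u : ℕ → ℝ) : ∀ m n, m ≤ n →
    ∑ k ∈ Ico m n, (u (k + 1) - u k) = u n - u m := by
  intro m n h
  induction n, h using Nat.le_induction with
  | base => simp
  | succ n h ih =>
    rw [Finset.sum_Ico_succ_top h, ih]; ring

/-- discrete concavity + zero endpoints implies nonneg -/
private lemma aux_nonneg (b A : ℕ) (hbA : b < A) (u : ℕ → ℝ)
    (hub : u b = 0) (huA : u A = 0)
    (hconc : ∀ a, b ≤ a → a + 2 ≤ A → u (a + 2) - 2 * u (a + 1) + u a ≤ 0) :
    ∀ a, b ≤ a → a ≤ A → 0 ≤ u a := by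
  set d : ℕ → ℝ := fun k => u (k + 1) - u k with hd
  have anti : ∀ j k, b ≤ j → j ≤ k → k + 1 ≤ A → d k ≤ d j := by
    intro j k hbj hjk hkA
    induction k, hjk using Nat.le_induction with
    | base => exact le_refl _
    | succ k hjk ih =>
      have h1 : d (k + 1) ≤ d k := by
        have := hconc k (hbj.trans hjk) (by omega)
        simp only [hd]; nlinarith
      exact h1.trans (ih (by omega))
  intro a hba haA
  rcases eq_or_lt_of_le hba with rfl | hba'
  · simp [hub]
  rcases eq_or_lt_of_le haA with rfl | haA'
  · simp [huA]
  -- b < a < A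
  obtain ⟨c, rfl⟩ : ∃ c, a = c + 1 := ⟨a - 1, by omega⟩
  -- u a ≥ (a - b) * d c  and  u a ≥ -(A - a) * d c
  have h1 : ((c + 1 - b : ℕ) : ℝ) * d c ≤ u (c + 1) := by
    have key : ∑ k ∈ Ico b (c + 1), d c ≤ ∑ k ∈ Ico b (c + 1), d k := by
      apply Finset.sum_le_sum
      intro k hk
      simp only [Finset.mem_Ico] at hk
      exact anti k c hk.1 (by omega) (by omega)
    rw [tele u b (c + 1) (by omega)] at key
    simp only [Finset.sum_const, Nat.card_Ico, nsmul_eq_mul] at key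
    rw [hub] at key; linarith
  have h2 : u (c + 1) - 0 ≥ -(((A - (c + 1) : ℕ) : ℝ) * d c) := by
    have key : ∑ k ∈ Ico (c + 1) A, d k ≤ ∑ k ∈ Ico (c + 1) A, d c := by
      apply Finset.sum_le_sum
      intro k hk
      simp only [Finset.mem_Ico] at hk
      exact anti c k (by omega) (by omega) (by omega)
    rw [tele u (c + 1) A (by omega)] at key
    simp only [Finset.sum_const, Nat.card_Ico, nsmul_eq_mul] at key
    rw [huA] at key; linarith
  rcases le_or_gt 0 (d c) with hdc | hdc
  · have : (0 : ℝ) ≤ ((c + 1 - b : ℕ) : ℝ) * d c :=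
      mul_nonneg (by positivity) hdc
    linarith
  · have : (0 : ℝ) ≤ -(((A - (c + 1) : ℕ) : ℝ) * d c) := by
      have : (0:ℝ) ≤ ((A - (c + 1) : ℕ) : ℝ) := by positivity
      nlinarith
    linarith

/-- If the absolute second forward differences of `f` on `{b,…,A}` are
bounded by `H`, then the linear interpolant between `(b, f b)` and `(A, f A)` satisfies
the error bound `|L(a) − f(a)| ≤ (H/2)·(a−b)·(A−a)` for all `b ≤ a ≤ A`. -/
theorem linear_interpolation_error
    (b A : ℕ) (hbA : b < A) (f : ℕ → ℝ) (H : ℝ) (hH : 0 ≤ H)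
    (hsecond : ∀ a : ℕ, b ≤ a → a + 2 ≤ A →
      |f (a + 2) - 2 * f (a + 1) + f a| ≤ H) :
    ∀ a : ℕ, b ≤ a → a ≤ A →
      |f b + (((a : ℝ) - (b : ℝ)) / ((A : ℝ) - (b : ℝ))) * (f A - f b) - f a| ≤
        H / 2 * ((a : ℝ) - (b : ℝ)) * ((A : ℝ) - (a : ℝ)) := by
  have hAb : (A : ℝ) - (b : ℝ) ≠ 0 := by
    have : (b : ℝ) < (A : ℝ) := by exact_mod_cast hbA
    linarith
  set L : ℕ → ℝ := fun a => f b + (((a : ℝ) - b) / ((A : ℝ) - b)) * (f A - f b) with hL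
  set q : ℕ → ℝ := fun a => H / 2 * ((a : ℝ) - b) * ((A : ℝ) - a) with hq
  have hLb : L b = f b := by simp [hL]
  have hLA : L A = f A := by simp only [hL]; field_simp; ring
  have hL2 : ∀ a : ℕ, L (a + 2) - 2 * L (a + 1) + L a = 0 := by
    intro a; simp only [hL]; push_cast; field_simp; ring
  have hq2 : ∀ a : ℕ, q (a + 2) - 2 * q (a + 1) + q a = -H := by
    intro a; simp only [hq]; push_cast; ring
  have hqb : q b = 0 := by simp [hq]
  have hqA : q A = 0 := by simp [hq]
  have n1 := aux_nonneg b A hbA (fun a => q a - (L a - f a)) (by simp [hqb, hLb])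
    (by simp [hqA, hLA]) (by
      intro a hba ha2
      have h2 := hsecond a hba ha2
      have e1 := hL2 a; have e2 := hq2 a
      rw [abs_le] at h2
      show q (a+2) - (L (a+2) - f (a+2)) - 2 * (q (a+1) - (L (a+1) - f (a+1))) + (q a - (L a - f a)) ≤ 0
      linarith [h2.1, h2.2])
  have n2 := aux_nonneg b A hbA (fun a => q a + (L a - f a)) (by simp [hqb, hLb])
    (by simp [hqA, hLA]) (by
      intro a hba ha2
      have h2 := hsecond a hba ha2
      have e1 := hL2 a; have e2 := hq2 a
      rw [abs_le] at h2
      show q (a+2) + (L (a+2) - f (a+2)) - 2 * (q (a+1) + (L (a+1) - f (a+1))) + (q a + (L a - f a)) ≤ 0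
      linarith [h2.1, h2.2])
  intro a hba haA
  have g1 : 0 ≤ q a - (L a - f a) := n1 a hba haA
  have g2 : 0 ≤ q a + (L a - f a) := n2 a hba haA
  show |L a - f a| ≤ q a
  rw [abs_le]
  constructor <;> linarith
end
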